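/- arXiv:2303.12480 — 3 statements merged into one kernel-verified Lean document; each statement's English description precedes it below -/
import Mathlib

section
/- For every integer N ≥ 1, δ > 0, θ = Nδ, and every 0 ≤ n < N⁴: E[(dX¹_{n+1})² | F_{nN}] = (N−1)δ + 2δ·1{ε_{nN} = −1} almost everywhere; in particular E[(dX¹_{n+1})² | F_{nN}] = θ(1 + c) almost everywhere for a measurable function c with |c| ≤ 1/N. The analogous identity holds for dX² with the indicator 1{ε_{nN} = +1}. -/
open MeasureTheory Filter
open scoped ENNReal MeasureTheory

noncomputable section

/-- Lebesgue measure restricted to `Ω = [0,1)`. -/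
def P : Measure ℝ := volume.restrict (Set.Ico 0 1)

/-- Rademacher variable `ε_k` : `+1` on the right half of the dyadic interval of
generation `k` containing `x`, `-1` otherwise. -/
def rad (k : ℕ) (x : ℝ) : ℝ := if Odd ⌊(2 : ℝ) ^ (k + 1) * x⌋ then 1 else -1

/-- Increment `dB¹_l = 1{ε_{l-1} = -1} ε_l √(2δ)`. -/
def dB1 (δ : ℝ) (l : ℕ) (x : ℝ) : ℝ :=
  (if rad (l - 1) x = -1 then 1 else 0) * rad l x * Real.sqrt (2 * δ)

/-- Increment `dB²_l = 1{ε_{l-1} = +1} ε_l √(2δ)`. -/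
def dB2 (δ : ℝ) (l : ℕ) (x : ℝ) : ℝ :=
  (if rad (l - 1) x = 1 then 1 else 0) * rad l x * Real.sqrt (2 * δ)

/-- First coordinate of the discrete random walk. -/
def B1 (δ : ℝ) (k : ℕ) (x : ℝ) : ℝ := ∑ l ∈ Finset.Icc 1 k, dB1 δ l x

/-- Second coordinate of the discrete random walk. -/
def B2 (δ : ℝ) (k : ℕ) (x : ℝ) : ℝ := ∑ l ∈ Finset.Icc 1 k, dB2 δ l x

/-- The planar random walk `B_k = (B¹_k, B²_k)`. -/
def Bpt (δ : ℝ) (k : ℕ) (x : ℝ) : ℝ × ℝ := (B1 δ k x, B2 δ k x)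

/-- Euclidean norm of the planar walk at step `k`. -/
def Bnorm (δ : ℝ) (k : ℕ) (x : ℝ) : ℝ := Real.sqrt (B1 δ k x ^ 2 + B2 δ k x ^ 2)

/-- Coarse increment `dX¹_{n+1} = Σ_{l=1}^N dB¹_{nN+l}`. -/
def dX1 (δ : ℝ) (N n : ℕ) (x : ℝ) : ℝ := ∑ l ∈ Finset.Icc 1 N, dB1 δ (n * N + l) x

/-- Coarse increment `dX²_{n+1} = Σ_{l=1}^N dB²_{nN+l}`. -/
def dX2 (δ : ℝ) (N n : ℕ) (x : ℝ) : ℝ := ∑ l ∈ Finset.Icc 1 N, dB2 δ (n * N + l) x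

/-- The σ-algebra `F_k` generated by `ε_0, …, ε_k`. -/
def Ffil (k : ℕ) : MeasurableSpace ℝ :=
  ⨆ i ∈ Finset.Iic k, MeasurableSpace.comap (rad i) (inferInstance : MeasurableSpace ℝ)

/-- The stopping index `n_ε(x)` : the minimum of `N⁴` and the first `n ∈ [1, N⁴]`
with `|X_n(x)| > 1 - ε`, where `X_n = B_{nN}`. -/
def nstop (δ ε : ℝ) (N : ℕ) (x : ℝ) : ℕ :=
  sInf (insert (N ^ 4) {n | 1 ≤ n ∧ n ≤ N ^ 4 ∧ 1 - ε < Bnorm δ (n * N) x})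

lemma rad_cases (k : ℕ) (x : ℝ) : rad k x = 1 ∨ rad k x = -1 := by
  unfold rad; split <;> simp

lemma rad_sq (k : ℕ) (x : ℝ) : rad k x * rad k x = 1 := by
  rcases rad_cases k x with h | h <;> rw [h] <;> norm_num

lemma abs_rad (k : ℕ) (x : ℝ) : |rad k x| = 1 := by
  rcases rad_cases k x with h | h <;> rw [h] <;> norm_num

lemma measurable_rad (k : ℕ) : Measurable (rad k) := by
  unfold rad
  refine Measurable.ite ?_ measurable_const measurable_const
  have h : Measurable fun x : ℝ => ⌊(2:ℝ) ^ (k+1) * x⌋ :=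
    (measurable_const.mul measurable_id).floor
  exact h (MeasurableSet.of_discrete (s := {n : ℤ | Odd n}))

instance : IsFiniteMeasure P := by
  constructor
  rw [P, Measure.restrict_apply MeasurableSet.univ]
  simp [Real.volume_Ico]

lemma floor_congr_div (d : ℤ) (hd : 0 < d) (u v : ℝ) (h : ⌊u⌋ = ⌊v⌋) :
    ⌊u / (d : ℝ)⌋ = ⌊v / (d : ℝ)⌋ := by
  have hd' : (0:ℝ) < (d:ℝ) := by exact_mod_cast hd
  have key : ∀ w z : ℝ, ⌊w⌋ = ⌊z⌋ → ⌊w / (d:ℝ)⌋ ≤ ⌊z / (d:ℝ)⌋ := by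
    intro w z hwz
    set p := ⌊w / (d:ℝ)⌋ with hp
    have h1 : (p : ℝ) ≤ w / d := Int.floor_le _
    have h2 : (p : ℝ) * d ≤ w := by
      rwa [le_div_iff₀ hd'] at h1
    have h3 : p * d ≤ ⌊w⌋ := by
      have := Int.le_floor.mpr (by exact_mod_cast h2)
      exact_mod_cast this
    have h4 : (p : ℝ) * d ≤ z := by
      have h3' : p * d ≤ ⌊z⌋ := hwz ▸ h3
      have : ((p * d : ℤ) : ℝ) ≤ z := le_trans (by exact_mod_cast h3') (Int.floor_le _)
      push_cast at this
      linarith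
    have : (p:ℝ) ≤ z / d := by rwa [le_div_iff₀ hd']
    exact Int.le_floor.mpr this
  exact le_antisymm (key u v h) (key v u h.symm)

lemma floor_congr_pow {a b : ℕ} (hab : a ≤ b) {x y : ℝ}
    (h : ⌊(2:ℝ)^b * x⌋ = ⌊(2:ℝ)^b * y⌋) : ⌊(2:ℝ)^a * x⌋ = ⌊(2:ℝ)^a * y⌋ := by
  have hx : (2:ℝ)^a * x = ((2:ℝ)^b * x) / ((2^(b-a) : ℤ) : ℝ) := by
    have : (2:ℝ)^(b-a) ≠ 0 := by positivity
    push_cast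
    rw [eq_div_iff this, mul_comm ((2:ℝ)^a * x), ← mul_assoc, ← pow_add]
    congr 2
    omega
  have hy : (2:ℝ)^a * y = ((2:ℝ)^b * y) / ((2^(b-a) : ℤ) : ℝ) := by
    have : (2:ℝ)^(b-a) ≠ 0 := by positivity
    push_cast
    rw [eq_div_iff this, mul_comm ((2:ℝ)^a * y), ← mul_assoc, ← pow_add]
    congr 2
    omega
  rw [hx, hy]
  exact floor_congr_div _ (by positivity) _ _ h

lemma rad_congr {a b : ℕ} (hab : a + 1 ≤ b) {x y : ℝ}
    (h : ⌊(2:ℝ)^b * x⌋ = ⌊(2:ℝ)^b * y⌋) : rad a x = rad a y := by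
  unfold rad
  rw [floor_congr_pow hab h]

lemma pair_sum (K : ℕ) (g : ℕ → ℝ) :
    ∑ j ∈ Finset.range (2*K), g j = ∑ i ∈ Finset.range K, (g (2*i) + g (2*i+1)) := by
  induction K with
  | zero => simp
  | succ K ih =>
    have h2 : 2*(K+1) = (2*K+1)+1 := by ring
    rw [h2, Finset.sum_range_succ, Finset.sum_range_succ, ih, Finset.sum_range_succ]
    ring

lemma integral_Ico_pieces (F : ℝ → ℝ) (c : ℝ) (hc : 0 ≤ c) :
    ∀ n : ℕ, IntegrableOn F (Set.Ico 0 (n*c)) →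
    ∫ x in Set.Ico (0:ℝ) (n*c), F x =
      ∑ j ∈ Finset.range n, ∫ x in Set.Ico ((j:ℝ)*c) ((j+1)*c), F x := by
  intro n
  induction n with
  | zero => simp
  | succ n ih =>
    intro hF
    have hle1 : (0:ℝ) ≤ (n:ℝ)*c := by positivity
    have hle2 : (n:ℝ)*c ≤ ((n:ℝ)+1)*c := by nlinarith
    have hcast : ((n+1 : ℕ) : ℝ) = (n:ℝ)+1 := by push_cast; ring
    have hunion : Set.Ico (0:ℝ) ((n:ℝ)*c) ∪ Set.Ico ((n:ℝ)*c) (((n:ℝ)+1)*c)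
        = Set.Ico (0:ℝ) (((n:ℝ)+1)*c) := Set.Ico_union_Ico_eq_Ico hle1 hle2
    have hF' : IntegrableOn F (Set.Ico 0 (((n:ℝ)+1)*c)) := by rwa [hcast] at hF
    have hi1 : IntegrableOn F (Set.Ico 0 ((n:ℝ)*c)) :=
      hF'.mono_set (Set.Ico_subset_Ico le_rfl hle2)
    have hi2 : IntegrableOn F (Set.Ico ((n:ℝ)*c) (((n:ℝ)+1)*c)) :=
      hF'.mono_set (Set.Ico_subset_Ico hle1 le_rfl)
    rw [hcast, ← hunion,
      setIntegral_union (Set.Ico_disjoint_Ico_same) measurableSet_Ico hi1 hi2,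
      ih hi1, Finset.sum_range_succ]

lemma key (b : ℕ) (h : ℝ → ℝ)
    (hdep : ∀ x y : ℝ, ⌊(2:ℝ)^b * x⌋ = ⌊(2:ℝ)^b * y⌋ → h x = h y) :
    ∫ x in Set.Ico (0:ℝ) 1, h x * rad b x = 0 := by
  set c : ℝ := ((2:ℝ)^(b+1))⁻¹ with hc
  have hcpos : 0 < c := by positivity
  set G : ℤ → ℝ := fun j => h ((j:ℝ)*c) * (if Odd j then 1 else -1) with hG
  set F : ℝ → ℝ := fun x => h x * rad b x with hF
  have hfact : ∀ x : ℝ, F x = G ⌊(2:ℝ)^(b+1) * x⌋ := by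
    intro x
    have h1 : ⌊(2:ℝ)^(b+1) * ((⌊(2:ℝ)^(b+1)*x⌋ : ℝ) * c)⌋ = ⌊(2:ℝ)^(b+1)*x⌋ := by
      rw [← mul_assoc, mul_comm ((2:ℝ)^(b+1)), mul_assoc, hc, mul_inv_cancel₀ (by positivity),
        mul_one, Int.floor_intCast]
    have h2 : h x = h ((⌊(2:ℝ)^(b+1)*x⌋ : ℝ) * c) :=
      hdep _ _ (floor_congr_pow (Nat.le_succ b) h1.symm)
    rw [hF, hG]
    simp only
    rw [← h2, rad]
  have hmeas : Measurable F := by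
    have : F = G ∘ (fun x => ⌊(2:ℝ)^(b+1) * x⌋) := funext hfact
    rw [this]
    exact measurable_from_top.comp ((measurable_const.mul measurable_id).floor)
  set C : ℝ := ∑ j ∈ Finset.range (2^(b+1)), |G (j:ℤ)| with hC
  have hbound : ∀ x ∈ Set.Ico (0:ℝ) 1, |F x| ≤ C := by
    intro x hx
    have h0 : (0:ℤ) ≤ ⌊(2:ℝ)^(b+1)*x⌋ := Int.floor_nonneg.mpr (by have := hx.1; positivity)
    have h1 : ⌊(2:ℝ)^(b+1)*x⌋ < ((2^(b+1) : ℕ) : ℤ) := by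
      apply Int.floor_lt.mpr
      push_cast
      calc (2:ℝ)^(b+1)*x < 2^(b+1)*1 := mul_lt_mul_of_pos_left hx.2 (by positivity)
        _ = 2^(b+1) := by ring
    set j : ℕ := (⌊(2:ℝ)^(b+1)*x⌋).toNat with hj
    have hjr : j ∈ Finset.range (2^(b+1)) := by rw [Finset.mem_range]; omega
    have hjc : ((j:ℕ):ℤ) = ⌊(2:ℝ)^(b+1)*x⌋ := by omega
    rw [hfact x, ← hjc]
    exact Finset.single_le_sum (f := fun j : ℕ => |G (j:ℤ)|) (fun _ _ => abs_nonneg _) hjr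
  have hint : IntegrableOn F (Set.Ico (0:ℝ) 1) := by
    apply Integrable.mono' (integrable_const C) hmeas.aestronglyMeasurable.restrict
    exact (ae_restrict_iff' measurableSet_Ico).mpr (Filter.Eventually.of_forall hbound)
  have hone : ((2^(b+1) : ℕ) : ℝ) * c = 1 := by
    push_cast
    rw [hc, mul_inv_cancel₀ (by positivity)]
  have hpieces := integral_Ico_pieces F c hcpos.le (2^(b+1)) (by rw [hone]; exact hint)
  rw [hone] at hpieces
  have hatomval : ∀ j : ℕ, ∫ x in Set.Ico ((j:ℝ)*c) (((j:ℝ)+1)*c), F x = c * G (j:ℤ) := by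
    intro j
    have heval : ∀ x ∈ Set.Ico ((j:ℝ)*c) (((j:ℝ)+1)*c), F x = G (j:ℤ) := by
      intro x hx
      rw [hfact x]
      congr 1
      rw [Int.floor_eq_iff]
      constructor
      · push_cast
        calc (j:ℝ) = (j:ℝ)*c*(2^(b+1)) := by
              rw [hc, mul_assoc, inv_mul_cancel₀ (by positivity : ((2:ℝ)^(b+1)) ≠ 0), mul_one]
          _ ≤ (2:ℝ)^(b+1) * x := by
              rw [mul_comm ((2:ℝ)^(b+1))]
              exact mul_le_mul_of_nonneg_right hx.1 (by positivity)
      · push_cast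
        calc (2:ℝ)^(b+1)*x < 2^(b+1)*(((j:ℝ)+1)*c) :=
              mul_lt_mul_of_pos_left hx.2 (by positivity)
          _ = (j:ℝ)+1 := by
              rw [hc, mul_comm ((j:ℝ)+1), ← mul_assoc,
                mul_inv_cancel₀ (by positivity : ((2:ℝ)^(b+1)) ≠ 0), one_mul]
    rw [setIntegral_congr_fun measurableSet_Ico heval, setIntegral_const, Real.volume_real_Ico]
    have : ((j:ℝ)+1)*c - (j:ℝ)*c = c := by ring
    rw [this, max_eq_left hcpos.le, smul_eq_mul]
  rw [hpieces]
  have h2b : 2^(b+1) = 2 * 2^b := by ring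
  rw [h2b]
  rw [pair_sum (2^b) (fun j => ∫ x in Set.Ico ((j:ℝ)*c) (((j:ℝ)+1)*c), F x)]
  apply Finset.sum_eq_zero
  intro i _
  rw [hatomval, hatomval]
  have hheq : h (((2*i:ℕ):ℝ)*c) = h (((2*i+1:ℕ):ℝ)*c) := by
    apply hdep
    have e1 : (2:ℝ)^b * (((2*i:ℕ):ℝ)*c) = (i:ℕ) := by
      push_cast
      rw [hc]
      field_simp
      ring
    have e2 : (2:ℝ)^b * (((2*i+1:ℕ):ℝ)*c) = (i:ℝ) + 1/2 := by
      push_cast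
      rw [hc]
      field_simp
      ring
    rw [e1, e2]
    rw [Int.floor_natCast]
    symm
    rw [Int.floor_eq_iff]
    constructor
    · push_cast; linarith
    · push_cast; linarith
  rw [hG]
  simp only
  have o1 : ¬ Odd ((2*i:ℕ):ℤ) := by push_cast; simp [Int.even_mul, parity_simps]
  have o2 : Odd ((2*i+1:ℕ):ℤ) := by push_cast; simp [parity_simps]
  rw [if_neg o1, if_pos o2]
  push_cast at hheq ⊢
  rw [hheq]
  ring

lemma Ffil_le (k : ℕ) : Ffil k ≤ (inferInstance : MeasurableSpace ℝ) := by
  apply iSup₂_le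
  intro i _
  exact (measurable_rad i).comap_le

lemma rad_measurable_Ffil (k : ℕ) : Measurable[Ffil k] (rad k) := by
  have hle : MeasurableSpace.comap (rad k) (inferInstance : MeasurableSpace ℝ) ≤ Ffil k :=
    le_iSup₂ (f := fun i (_ : i ∈ Finset.Iic k) => MeasurableSpace.comap (rad i) inferInstance)
      k (Finset.mem_Iic.mpr le_rfl)
  exact Measurable.of_comap_le hle

lemma Ffil_inv {k : ℕ} {s : Set ℝ} (hs : MeasurableSet[Ffil k] s)
    {x y : ℝ} (hxy : ∀ i ≤ k, rad i x = rad i y) : x ∈ s ↔ y ∈ s := by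
  set f : ℝ → (ℕ → ℝ) := fun x i => if i ≤ k then rad i x else 0 with hf
  have Hle : Ffil k ≤ MeasurableSpace.comap f ⊤ := by
    apply iSup₂_le
    intro i hi
    have hik : i ≤ k := Finset.mem_Iic.mp hi
    have hfact : rad i = (fun v : ℕ → ℝ => v i) ∘ f := by
      funext x; simp [hf, hik]
    rw [hfact, ← MeasurableSpace.comap_comp]
    exact MeasurableSpace.comap_mono le_top
  obtain ⟨T, -, hT⟩ := MeasurableSpace.measurableSet_comap.mp (Hle s hs)
  have hfxy : f x = f y := by
    funext i
    simp only [hf]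
    split
    · exact hxy i (by assumption)
    · rfl
  rw [← hT]
  simp only [Set.mem_preimage, hfxy]

lemma keyP {m b : ℕ} (hmb : m + 1 ≤ b) (h : ℝ → ℝ)
    (hdep : ∀ x y : ℝ, ⌊(2:ℝ)^b * x⌋ = ⌊(2:ℝ)^b * y⌋ → h x = h y)
    {s : Set ℝ} (hs : MeasurableSet[Ffil m] s) :
    ∫ x in s, h x * rad b x ∂P = 0 := by
  have hsm : MeasurableSet s := Ffil_le m s hs
  rw [P, Measure.restrict_restrict hsm, Set.inter_comm, ← setIntegral_indicator hsm]
  have hind : (Set.Ico (0:ℝ) 1).indicator 1 = (1 : ℝ → ℝ) → True := fun _ => trivial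
  have heq : ∀ x : ℝ, s.indicator (fun x => h x * rad b x) x = (s.indicator h x) * rad b x := by
    intro x
    by_cases hx : x ∈ s <;> simp [Set.indicator_apply, hx]
  rw [show (fun x => s.indicator (fun x => h x * rad b x) x)
      = fun x => (s.indicator h x) * rad b x from funext heq]
  apply key
  intro x y hxy
  have hmem : x ∈ s ↔ y ∈ s := by
    apply Ffil_inv hs
    intro i hik
    exact rad_congr (b := m+1) (by omega) (floor_congr_pow (a := m+1) (by omega) hxy)
  by_cases hx : x ∈ s
  · rw [Set.indicator_of_mem hx, Set.indicator_of_mem (hmem.mp hx)]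
    exact hdep x y hxy
  · rw [Set.indicator_of_notMem hx, Set.indicator_of_notMem (fun hy => hx (hmem.mpr hy))]

lemma integrable_P {F : ℝ → ℝ} (hmeas : Measurable F) (C : ℝ) (hC : ∀ x, |F x| ≤ C) :
    Integrable F P := by
  apply Integrable.mono' (integrable_const C) hmeas.aestronglyMeasurable
  exact Filter.Eventually.of_forall hC

lemma half_int {m a : ℕ} (hma : m + 1 ≤ a) {e : ℝ} (he : e = 1 ∨ e = -1)
    {s : Set ℝ} (hs : MeasurableSet[Ffil m] s) :
    ∫ x in s, (if rad a x = e then (1:ℝ) else 0) ∂P = (P s).toReal * (1/2) := by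
  have hsm : MeasurableSet s := Ffil_le m s hs
  have hptw : ∀ x : ℝ, (if rad a x = e then (1:ℝ) else 0) = 1/2 + (e/2) * rad a x := by
    intro x
    rcases rad_cases a x with h | h <;> rcases he with he | he <;>
      rw [h, he] <;> norm_num
  rw [show (fun x => if rad a x = e then (1:ℝ) else 0)
      = fun x => 1/2 + (e/2) * rad a x from funext hptw]
  have hrad_int : Integrable (fun x => rad a x) P :=
    integrable_P (measurable_rad a) 1 (fun x => (abs_rad a x).le)
  rw [integral_add (integrable_const _)
    ((hrad_int.const_mul (e/2)).integrableOn)]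
  rw [setIntegral_const, integral_const_mul]
  have h0 : ∫ x in s, rad a x ∂P = 0 := by
    have := keyP (b := a) hma (fun _ => (1:ℝ)) (fun _ _ _ => rfl) hs
    simpa using this
  rw [h0, smul_eq_mul, measureReal_def]
  ring

lemma master (δ : ℝ) (hδ : 0 < δ) (N : ℕ) (hN : 1 ≤ N) (n : ℕ) (e : ℝ) (he : e = 1 ∨ e = -1) :
    P[fun x => (∑ l ∈ Finset.Icc 1 N,
        (if rad (n*N + l - 1) x = e then (1:ℝ) else 0) * rad (n*N + l) x * Real.sqrt (2*δ)) ^ 2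
      | Ffil (n*N)]
    =ᵐ[P] fun x => ((N:ℝ) - 1) * δ + 2 * δ * (if rad (n*N) x = e then 1 else 0) := by
  set m := n*N with hm
  set ind : ℕ → ℝ → ℝ := fun a x => if rad a x = e then 1 else 0 with hind
  set v : ℕ → ℝ → ℝ := fun l x => ind (m + l - 1) x * rad (m+l) x with hv
  have hind_meas : ∀ a, Measurable (ind a) := by
    intro a
    exact Measurable.ite (measurableSet_eq_fun (measurable_rad a) measurable_const)
      measurable_const measurable_const
  have hind_abs : ∀ a x, |ind a x| ≤ 1 := by
    intro a x
    rw [hind]; dsimp only; split <;> norm_num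
  have hv_meas : ∀ l, Measurable (v l) := fun l => (hind_meas _).mul (measurable_rad _)
  have hv_abs : ∀ l x, |v l x| ≤ 1 := by
    intro l x
    rw [hv]; dsimp only
    rw [abs_mul, abs_rad, mul_one]
    exact hind_abs _ x
  set F : ℝ → ℝ := fun x => (∑ l ∈ Finset.Icc 1 N, v l x * Real.sqrt (2*δ)) ^ 2 with hF
  set g : ℝ → ℝ := fun x => ((N:ℝ) - 1) * δ + 2 * δ * ind m x with hg
  have hsqrt_sq : Real.sqrt (2*δ) ^ 2 = 2*δ := Real.sq_sqrt (by linarith)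
  -- pointwise expansion
  have hFexp : ∀ x, F x = 2*δ * ∑ l ∈ Finset.Icc 1 N, ∑ l' ∈ Finset.Icc 1 N, v l x * v l' x := by
    intro x
    rw [hF]; dsimp only
    rw [← Finset.sum_mul, mul_pow, hsqrt_sq, pow_two, Finset.sum_mul_sum]
    ring
  -- measurability and integrability of F
  have hF_meas : Measurable F := by
    apply Measurable.pow_const
    exact Finset.measurable_sum _ (fun l _ => (hv_meas l).mul measurable_const)
  have hF_abs : ∀ x, |F x| ≤ ((N:ℝ) * Real.sqrt (2*δ)) ^ 2 := by
    intro x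
    rw [hF]; dsimp only
    rw [abs_pow]
    apply pow_le_pow_left₀ (abs_nonneg _)
    calc |∑ l ∈ Finset.Icc 1 N, v l x * Real.sqrt (2*δ)|
        ≤ ∑ l ∈ Finset.Icc 1 N, |v l x * Real.sqrt (2*δ)| := Finset.abs_sum_le_sum_abs _ _
      _ ≤ ∑ l ∈ Finset.Icc 1 N, Real.sqrt (2*δ) := by
          apply Finset.sum_le_sum
          intro l _
          rw [abs_mul, abs_of_nonneg (Real.sqrt_nonneg _)]
          exact mul_le_of_le_one_left (Real.sqrt_nonneg _) (hv_abs l x)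
      _ = (N:ℝ) * Real.sqrt (2*δ) := by
          rw [Finset.sum_const, Nat.card_Icc]
          simp [nsmul_eq_mul]
  have hF_int : Integrable F P := integrable_P hF_meas _ hF_abs
  have hg_meas : Measurable g := by
    exact measurable_const.add (measurable_const.mul (hind_meas m))
  have hg_abs : ∀ x, |g x| ≤ |((N:ℝ)-1)*δ| + |2*δ| := by
    intro x
    rw [hg]; dsimp only
    refine (abs_add_le _ _).trans (add_le_add le_rfl ?_)
    rw [abs_mul]
    exact mul_le_of_le_one_right (abs_nonneg _) (hind_abs m x)
  have hg_int : Integrable g P := integrable_P hg_meas _ hg_abs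
  -- the set integral identity
  have hset : ∀ s : Set ℝ, MeasurableSet[Ffil m] s →
      ∫ x in s, g x ∂P = ∫ x in s, F x ∂P := by
    intro s hs
    have hsm : MeasurableSet s := Ffil_le m s hs
    -- cross terms vanish
    have hcross : ∀ l l', 1 ≤ l → l < l' → ∫ x in s, v l x * v l' x ∂P = 0 := by
      intro l l' hl hll'
      have hptw : ∀ x, v l x * v l' x = (v l x * ind (m + l' - 1) x) * rad (m + l') x := by
        intro x
        rw [hv]; dsimp only
        ring
      rw [show (fun x => v l x * v l' x)
          = fun x => (v l x * ind (m + l' - 1) x) * rad (m + l') x from funext hptw]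
      apply keyP (b := m + l') (by omega) _ _ hs
      intro x y hxy
      have r1 : rad (m + l - 1) x = rad (m + l - 1) y :=
        rad_congr (by omega) hxy
      have r2 : rad (m + l) x = rad (m + l) y :=
        rad_congr (by omega) hxy
      have r3 : rad (m + l' - 1) x = rad (m + l' - 1) y :=
        rad_congr (by omega) hxy
      rw [hv, hind]; dsimp only
      rw [r1, r2, r3]
    have hterm : ∀ l ∈ Finset.Icc 1 N, ∀ l' ∈ Finset.Icc 1 N,
        ∫ x in s, v l x * v l' x ∂P
          = if l = l' then ∫ x in s, ind (m + l - 1) x ∂P else 0 := by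
      intro l hl l' hl'
      rw [Finset.mem_Icc] at hl hl'
      by_cases hll' : l = l'
      · subst hll'
        rw [if_pos rfl]
        congr 1
        funext x
        rw [hv, hind]; dsimp only
        rcases rad_cases (m+l) x with h | h <;> by_cases h2 : rad (m+l-1) x = e <;>
          simp [h, h2] <;> ring
      · rw [if_neg hll']
        rcases Nat.lt_or_ge l l' with h | h
        · exact hcross l l' hl.1 h
        · have hlt : l' < l := by omega
          rw [show (fun x => v l x * v l' x) = fun x => v l' x * v l x from
            funext fun x => mul_comm _ _]
          exact hcross l' l hl'.1 hlt
    -- integrate the expansion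
    have hvv_int : ∀ l l', Integrable (fun x => v l x * v l' x) P := by
      intro l l'
      apply integrable_P ((hv_meas l).mul (hv_meas l')) 1
      intro x
      rw [Pi.mul_apply, abs_mul]
      exact mul_le_one₀ (hv_abs l x) (abs_nonneg _) (hv_abs l' x)
    have hFint : ∫ x in s, F x ∂P
        = 2*δ * ∑ l ∈ Finset.Icc 1 N, ∑ l' ∈ Finset.Icc 1 N, ∫ x in s, v l x * v l' x ∂P := by
      rw [show F = fun x => 2*δ * ∑ l ∈ Finset.Icc 1 N, ∑ l' ∈ Finset.Icc 1 N, v l x * v l' x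
        from funext hFexp]
      rw [integral_const_mul]
      congr 1
      rw [integral_finset_sum _ (fun l _ => (integrable_finset_sum _
        (fun l' _ => (hvv_int l l').integrableOn)))]
      apply Finset.sum_congr rfl
      intro l _
      rw [integral_finset_sum _ (fun l' _ => (hvv_int l l').integrableOn)]
    -- evaluate
    have hsum : ∑ l ∈ Finset.Icc 1 N, ∑ l' ∈ Finset.Icc 1 N, ∫ x in s, v l x * v l' x ∂P
        = ∑ l ∈ Finset.Icc 1 N, ∫ x in s, ind (m + l - 1) x ∂P := by
      apply Finset.sum_congr rfl
      intro l hl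
      rw [Finset.sum_congr rfl (fun l' hl' => hterm l hl l' hl')]
      rw [Finset.sum_ite_eq (Finset.Icc 1 N) l (fun _ => ∫ x in s, ind (m + l - 1) x ∂P)]
      rw [if_pos hl]
    have hicc : Finset.Icc 1 N = insert 1 (Finset.Icc 2 N) := by
      ext a
      simp only [Finset.mem_Icc, Finset.mem_insert]
      omega
    have hhalf : ∀ l ∈ Finset.Icc 2 N, ∫ x in s, ind (m + l - 1) x ∂P
        = (P s).toReal * (1/2) := by
      intro l hl
      rw [Finset.mem_Icc] at hl
      exact half_int (by omega) he hs
    have hcard : ∑ l ∈ Finset.Icc 2 N, ∫ x in s, ind (m + l - 1) x ∂P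
        = ((N:ℝ)-1) * ((P s).toReal * (1/2)) := by
      rw [Finset.sum_congr rfl hhalf, Finset.sum_const, Nat.card_Icc, nsmul_eq_mul]
      congr 1
      have h21 : N + 1 - 2 = N - 1 := by omega
      rw [h21, Nat.cast_sub hN, Nat.cast_one]
    have hsum2 : ∑ l ∈ Finset.Icc 1 N, ∫ x in s, ind (m + l - 1) x ∂P
        = ∫ x in s, ind m x ∂P + ((N:ℝ) - 1) * ((P s).toReal * (1/2)) := by
      rw [hicc, Finset.sum_insert (by simp), show m + 1 - 1 = m from by omega, hcard]
    -- left side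
    have hLHS : ∫ x in s, g x ∂P
        = ((N:ℝ) - 1) * δ * (P s).toReal + 2 * δ * ∫ x in s, ind m x ∂P := by
      rw [hg]; dsimp only
      have hind_int : Integrable (fun x => ind m x) P :=
        integrable_P (hind_meas m) 1 (fun x => hind_abs m x)
      rw [integral_add (integrable_const _)
        ((hind_int.const_mul (2*δ)).integrableOn)]
      rw [setIntegral_const, integral_const_mul, smul_eq_mul, measureReal_def]
      ring
    rw [hLHS, hFint, hsum, hsum2]
    ring
  -- assemble via uniqueness of conditional expectation
  have hle : Ffil m ≤ (inferInstance : MeasurableSpace ℝ) := Ffil_le m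
  haveI : SigmaFinite (P.trim hle) := by
    haveI := isFiniteMeasure_trim hle (μ := P)
    infer_instance
  have hgm : AEStronglyMeasurable[Ffil m] g P := by
    apply StronglyMeasurable.aestronglyMeasurable
    have hms : MeasurableSet[Ffil m] {x : ℝ | rad m x = e} :=
      measurableSet_eq_fun (rad_measurable_Ffil m) measurable_const
    have hmg : Measurable[Ffil m] g :=
      measurable_const.add (measurable_const.mul
        (Measurable.ite hms measurable_const measurable_const))
    exact hmg.stronglyMeasurable
  have := ae_eq_condExp_of_forall_setIntegral_eq hle hF_int
    (fun s _ _ => hg_int.integrableOn)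
    (fun s hs _ => hset s hs) hgm
  exact this.symm

lemma rhs_eq (δ θ : ℝ) (N : ℕ) (hN : 1 ≤ N) (hθ : θ = N * δ) (I : ℝ) :
    ((N : ℝ) - 1) * δ + 2 * δ * I = θ * (1 + (2 * I - 1) / N) := by
  have hN0 : (N:ℝ) ≠ 0 := by
    have : (1:ℝ) ≤ N := by exact_mod_cast hN
    linarith
  subst hθ
  field_simp
  ring

lemma c_meas (N k : ℕ) (e : ℝ) :
    Measurable (fun x => (2 * (if rad k x = e then (1:ℝ) else 0) - 1) / N) := by
  apply Measurable.div_const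
  apply Measurable.sub _ measurable_const
  apply Measurable.mul measurable_const
  exact Measurable.ite (measurableSet_eq_fun (measurable_rad k) measurable_const)
    measurable_const measurable_const

lemma c_abs (N k : ℕ) (e : ℝ) (x : ℝ) :
    |(2 * (if rad k x = e then (1:ℝ) else 0) - 1) / N| ≤ 1 / N := by
  have h1 : |2 * (if rad k x = e then (1:ℝ) else 0) - 1| = 1 := by split <;> norm_num
  rw [abs_div, h1, abs_of_nonneg (Nat.cast_nonneg N)]


/-- conditional second moments of the coarse increments. -/
theorem statement7 (δ : ℝ) (hδ : 0 < δ) (N : ℕ) (hN : 1 ≤ N) (θ : ℝ) (hθ : θ = N * δ)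
    (n : ℕ) (hn : n < N ^ 4) :
    (P[fun x => dX1 δ N n x ^ 2|Ffil (n * N)] =ᵐ[P]
      fun x => ((N : ℝ) - 1) * δ + 2 * δ * (if rad (n * N) x = -1 then 1 else 0)) ∧
    (∃ c : ℝ → ℝ, Measurable c ∧ (∀ x, |c x| ≤ 1 / N) ∧
      P[fun x => dX1 δ N n x ^ 2|Ffil (n * N)] =ᵐ[P] fun x => θ * (1 + c x)) ∧
    (P[fun x => dX2 δ N n x ^ 2|Ffil (n * N)] =ᵐ[P]
      fun x => ((N : ℝ) - 1) * δ + 2 * δ * (if rad (n * N) x = 1 then 1 else 0)) ∧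
    (∃ c : ℝ → ℝ, Measurable c ∧ (∀ x, |c x| ≤ 1 / N) ∧
      P[fun x => dX2 δ N n x ^ 2|Ffil (n * N)] =ᵐ[P] fun x => θ * (1 + c x)) := by
  have hd1 : (fun x => dX1 δ N n x ^ 2) = fun x => (∑ l ∈ Finset.Icc 1 N,
      (if rad (n*N + l - 1) x = -1 then (1:ℝ) else 0) * rad (n*N + l) x
        * Real.sqrt (2*δ)) ^ 2 := by
    funext x
    simp only [dX1, dB1]
  have hd2 : (fun x => dX2 δ N n x ^ 2) = fun x => (∑ l ∈ Finset.Icc 1 N,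
      (if rad (n*N + l - 1) x = 1 then (1:ℝ) else 0) * rad (n*N + l) x
        * Real.sqrt (2*δ)) ^ 2 := by
    funext x
    simp only [dX2, dB2]
  have h1 : P[fun x => dX1 δ N n x ^ 2|Ffil (n * N)] =ᵐ[P]
      fun x => ((N : ℝ) - 1) * δ + 2 * δ * (if rad (n * N) x = -1 then 1 else 0) := by
    rw [hd1]
    exact master δ hδ N hN n (-1) (Or.inr rfl)
  have h2 : P[fun x => dX2 δ N n x ^ 2|Ffil (n * N)] =ᵐ[P]
      fun x => ((N : ℝ) - 1) * δ + 2 * δ * (if rad (n * N) x = 1 then 1 else 0) := by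
    rw [hd2]
    exact master δ hδ N hN n 1 (Or.inl rfl)
  refine ⟨h1, ?_, h2, ?_⟩
  · exact ⟨fun x => (2 * (if rad (n*N) x = -1 then (1:ℝ) else 0) - 1) / N,
      c_meas N (n*N) (-1), c_abs N (n*N) (-1),
      h1.trans (Filter.Eventually.of_forall (fun x => rhs_eq δ θ N hN hθ _))⟩
  · exact ⟨fun x => (2 * (if rad (n*N) x = 1 then (1:ℝ) else 0) - 1) / N,
      c_meas N (n*N) 1, c_abs N (n*N) 1,
      h2.trans (Filter.Eventually.of_forall (fun x => rhs_eq δ θ N hN hθ _))⟩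


end
end

section
/- For every integer q ≥ 1 there exists a constant C_q > 0, depending only on q, such that for all δ > 0, all integers N ≥ 1, all 0 ≤ n < N⁴, and i ∈ {1,2}: E[|dX^i_{n+1}|^{2q} | F_{nN}] ≤ C_q θ^q almost everywhere, where θ = Nδ. -/
open MeasureTheory Filter
open scoped ENNReal MeasureTheory

noncomputable section

namespace S9

def ee (b : Bool) : ℝ := if b then 1 else -1

lemma abs_ee (b : Bool) : |ee b| ≤ 1 := by cases b <;> simp [ee]

lemma sum_range_two_mul {M : Type*} [AddCommMonoid M] (n : ℕ) (f : ℕ → M) :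
    ∑ t ∈ Finset.range (2*n), f t = ∑ u ∈ Finset.range n, (f (2*u) + f (2*u+1)) := by
  induction n with
  | zero => simp
  | succ n ih =>
      have h : 2*(n+1) = (2*n)+1+1 := by ring
      rw [h, Finset.sum_range_succ, Finset.sum_range_succ, ih, Finset.sum_range_succ, add_assoc]

lemma sum_even_range (p : ℕ) (F : ℕ → ℝ) :
    ∑ k ∈ Finset.range (2*p+1), (if Even k then F k else 0)
      = ∑ i ∈ Finset.range (p+1), F (2*i) := by
  induction p with
  | zero => simp
  | succ p ih =>
      have h : 2*(p+1)+1 = (2*p+1)+1+1 := by ring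
      rw [h, Finset.sum_range_succ, Finset.sum_range_succ, ih]
      have h1 : ¬ Even (2*p+1) := by simp [Nat.even_add_one, Nat.even_mul]
      have h2 : Even (2*p+1+1) := ⟨p+1, by ring⟩
      simp only [h1, h2, if_true, if_false]
      rw [Finset.sum_range_succ (f := fun i => F (2*i)) (n := p+1)]
      have h3 : 2*(p+1) = 2*p+2 := by ring
      rw [h3]; ring

lemma pair_pow_le (p : ℕ) (A c : ℝ) (hc : |c| ≤ 1) :
    (A + c)^(2*p) + (A - c)^(2*p)
      ≤ ∑ i ∈ Finset.range (p+1), 2 * ((2*p).choose (2*i)) * A^(2*i) := by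
  have habs : ∀ m : ℕ, c ^ m ≤ 1 := by
    intro m
    calc c ^ m ≤ |c ^ m| := le_abs_self _
    _ = |c| ^ m := by rw [abs_pow]
    _ ≤ 1 := pow_le_one₀ (abs_nonneg c) hc
  have hrw : ∑ i ∈ Finset.range (p+1), 2 * (((2*p).choose (2*i)) : ℝ) * A^(2*i)
      = ∑ k ∈ Finset.range (2*p+1), (if Even k then 2 * (((2*p).choose k) : ℝ) * A^k else 0) := by
    rw [sum_even_range]
  rw [hrw]
  have e1 : (A + c)^(2*p) = ∑ k ∈ Finset.range (2*p+1), A^k * c^(2*p-k) * ((2*p).choose k) :=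
    add_pow A c (2*p)
  have e2 : (A - c)^(2*p) = ∑ k ∈ Finset.range (2*p+1), A^k * (-c)^(2*p-k) * ((2*p).choose k) := by
    rw [sub_eq_add_neg]; exact add_pow A (-c) (2*p)
  rw [e1, e2, ← Finset.sum_add_distrib]
  apply Finset.sum_le_sum
  intro k hk
  rcases Nat.even_or_odd k with hkev | hkodd
  · have hmev : Even (2*p - k) := by
      rcases hkev with ⟨a, ha⟩
      have hk' : k ≤ 2*p := Nat.lt_succ_iff.mp (Finset.mem_range.mp hk)
      refine ⟨p - a, by omega⟩
    have hA : 0 ≤ A ^ k := hkev.pow_nonneg A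
    have hcc : (-c)^(2*p-k) = c^(2*p-k) := hmev.neg_pow c
    rw [hcc, if_pos hkev]
    have hCn : (0:ℝ) ≤ 2 * (((2*p).choose k) : ℝ) := by positivity
    have h2 : A^k * c^(2*p-k) ≤ A^k * 1 := mul_le_mul_of_nonneg_left (habs _) hA
    calc A ^ k * c ^ (2*p-k) * ((2*p).choose k) + A ^ k * c ^ (2*p-k) * ((2*p).choose k)
        = 2 * (((2*p).choose k) : ℝ) * (A^k * c^(2*p-k)) := by ring
      _ ≤ 2 * (((2*p).choose k) : ℝ) * (A^k * 1) := mul_le_mul_of_nonneg_left h2 hCn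
      _ = 2 * (((2*p).choose k) : ℝ) * A^k := by ring
  · have hmodd : ¬ Even (2*p - k) := by
      rw [Nat.even_sub (Nat.lt_succ_iff.mp (Finset.mem_range.mp hk))]
      simp [Nat.even_mul, Nat.not_even_iff_odd.mpr hkodd]
    have hcc : (-c)^(2*p-k) = -(c^(2*p-k)) := (Nat.not_even_iff_odd.mp hmodd).neg_pow c
    rw [hcc, if_neg (by simpa using Nat.not_even_iff_odd.mpr hkodd)]
    ring_nf
    simp

lemma x_pow_add (x : ℝ) (hx : 1 ≤ x) (m : ℕ) : x^m + x^(m+1) ≤ (x+1)^(m+1) := by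
  induction m with
  | zero => simpa using by linarith
  | succ m ih =>
      have hx0 : (0:ℝ) ≤ x := le_trans zero_le_one hx
      have h2 : (x^m + x^(m+1)) * (x+1) ≤ (x+1)^(m+1) * (x+1) := by
        apply mul_le_mul_of_nonneg_right ih; linarith
      have h3 : x^(m+1) + x^(m+1+1) ≤ (x^m + x^(m+1)) * (x+1) := by
        have he : (x^m + x^(m+1)) * (x+1) = x^(m+1) + x^(m+2) + (x^m + x^(m+1)) := by ring
        have hnn : (0:ℝ) ≤ x^m + x^(m+1) := by positivity
        rw [he]; nlinarith
      calc x^(m+1) + x^(m+1+1) ≤ (x^m + x^(m+1)) * (x+1) := h3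
        _ ≤ (x+1)^(m+1) * (x+1) := h2
        _ = (x+1)^(m+1+1) := by ring

lemma choose_le_four_pow (p i : ℕ) : ((2*p).choose i : ℝ) ≤ 4^p := by
  have h1 : (2*p).choose i ≤ 2^(2*p) := by
    rcases le_or_gt i (2*p) with hi | hi
    · calc (2*p).choose i ≤ ∑ m ∈ Finset.range (2*p+1), (2*p).choose m :=
            Finset.single_le_sum (fun m _ => Nat.zero_le _)
              (Finset.mem_range.mpr (Nat.lt_succ_of_le hi))
      _ = 2^(2*p) := Nat.sum_range_choose (2*p)
    · rw [Nat.choose_eq_zero_of_lt hi]; exact Nat.zero_le _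
  calc ((2*p).choose i : ℝ) ≤ ((2^(2*p) : ℕ) : ℝ) := by exact_mod_cast h1
  _ = 4^p := by rw [pow_mul]; norm_num

lemma arith_step (p N : ℕ) (hp : 1 ≤ p) :
    ∑ i ∈ Finset.range (p+1), 2 * (((2*p).choose (2*i)) : ℝ) * (2^N * 4^(i^2) * ((N:ℝ)+1)^i)
      ≤ 2^(N+1) * 4^(p^2) * ((N:ℝ)+2)^p := by
  obtain ⟨m, rfl⟩ : ∃ m, p = m + 1 := ⟨p - 1, (Nat.succ_pred_eq_of_pos hp).symm⟩
  have hN0 : (0:ℝ) ≤ (N:ℝ) := Nat.cast_nonneg N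
  have hterm : ∀ i ∈ Finset.range (m+1),
      (((2*(m+1)).choose (2*i)) : ℝ) * (4^(i^2) * ((N:ℝ)+1)^i)
        ≤ 4^(m+1) * (4^(m^2) * ((N:ℝ)+1)^m) := by
    intro i hi
    have hi' : i ≤ m := Nat.lt_succ_iff.mp (Finset.mem_range.mp hi)
    have h1 : (4:ℝ)^(i^2) ≤ 4^(m^2) :=
      pow_le_pow_right₀ (by norm_num) (Nat.pow_le_pow_left hi' 2)
    have h2 : ((N:ℝ)+1)^i ≤ ((N:ℝ)+1)^m := pow_le_pow_right₀ (by linarith) hi'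
    have h3 : (4:ℝ)^(i^2) * ((N:ℝ)+1)^i ≤ 4^(m^2) * ((N:ℝ)+1)^m :=
      mul_le_mul h1 h2 (by positivity) (by positivity)
    exact mul_le_mul (choose_le_four_pow (m+1) (2*i)) h3 (by positivity) (by positivity)
  have hsum : ∑ i ∈ Finset.range (m+1),
      (((2*(m+1)).choose (2*i)) : ℝ) * (4^(i^2) * ((N:ℝ)+1)^i)
        ≤ ((m:ℝ)+1) * (4^(m+1) * (4^(m^2) * ((N:ℝ)+1)^m)) := by
    calc ∑ i ∈ Finset.range (m+1), (((2*(m+1)).choose (2*i)) : ℝ) * (4^(i^2) * ((N:ℝ)+1)^i)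
        ≤ ∑ _i ∈ Finset.range (m+1), 4^(m+1) * (4^(m^2) * ((N:ℝ)+1)^m) :=
          Finset.sum_le_sum hterm
      _ = ((m:ℝ)+1) * (4^(m+1) * (4^(m^2) * ((N:ℝ)+1)^m)) := by
          rw [Finset.sum_const, Finset.card_range, nsmul_eq_mul]; push_cast; ring
  have hp4 : ((m:ℝ)+1) ≤ 4^m := by
    have := Nat.lt_pow_self (n := m) (show 1 < 4 by norm_num)
    exact_mod_cast Nat.succ_le_of_lt this
  have hpow : ((m:ℝ)+1) * (4^(m+1) * 4^(m^2)) ≤ 4^((m+1)^2) := by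
    have h2 : (4:ℝ)^m * (4^(m+1) * 4^(m^2)) = 4^((m+1)^2) := by
      rw [← pow_add, ← pow_add]; congr 1; ring
    have h1 : ((m:ℝ)+1) * (4^(m+1) * 4^(m^2)) ≤ 4^m * (4^(m+1) * 4^(m^2)) :=
      mul_le_mul_of_nonneg_right hp4 (by positivity)
    linarith
  have hx : ((N:ℝ)+1)^m + ((N:ℝ)+1)^(m+1) ≤ ((N:ℝ)+2)^(m+1) := by
    have := x_pow_add ((N:ℝ)+1) (by linarith) m
    calc ((N:ℝ)+1)^m + ((N:ℝ)+1)^(m+1) ≤ (((N:ℝ)+1)+1)^(m+1) := this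
      _ = ((N:ℝ)+2)^(m+1) := by ring_nf
  have key : ∑ i ∈ Finset.range (m+2),
      (((2*(m+1)).choose (2*i)) : ℝ) * (4^(i^2) * ((N:ℝ)+1)^i)
        ≤ 4^((m+1)^2) * ((N:ℝ)+2)^(m+1) := by
    rw [show m+2 = (m+1)+1 from rfl, Finset.sum_range_succ]
    have hlast : (((2*(m+1)).choose (2*(m+1))) : ℝ) * (4^((m+1)^2) * ((N:ℝ)+1)^(m+1))
        = 4^((m+1)^2) * ((N:ℝ)+1)^(m+1) := by rw [Nat.choose_self]; push_cast; ring
    have hS : ∑ i ∈ Finset.range (m+1),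
        (((2*(m+1)).choose (2*i)) : ℝ) * (4^(i^2) * ((N:ℝ)+1)^i)
          ≤ 4^((m+1)^2) * ((N:ℝ)+1)^m := by
      refine le_trans hsum ?_
      have : ((m:ℝ)+1) * (4^(m+1) * (4^(m^2) * ((N:ℝ)+1)^m))
          = (((m:ℝ)+1) * (4^(m+1) * 4^(m^2))) * ((N:ℝ)+1)^m := by ring
      rw [this]
      exact mul_le_mul_of_nonneg_right hpow (by positivity)
    rw [hlast]
    have h4 : (0:ℝ) ≤ 4^((m+1)^2) := by positivity
    nlinarith [mul_le_mul_of_nonneg_left hx h4]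
  calc ∑ i ∈ Finset.range (m+1+1), 2 * (((2*(m+1)).choose (2*i)) : ℝ)
          * (2^N * 4^(i^2) * ((N:ℝ)+1)^i)
      = 2^(N+1) * ∑ i ∈ Finset.range (m+2),
          (((2*(m+1)).choose (2*i)) : ℝ) * (4^(i^2) * ((N:ℝ)+1)^i) := by
        rw [Finset.mul_sum]
        refine Finset.sum_congr rfl fun i _ => ?_
        rw [pow_succ]; ring
    _ ≤ 2^(N+1) * (4^((m+1)^2) * ((N:ℝ)+2)^(m+1)) :=
        mul_le_mul_of_nonneg_left key (by positivity)
    _ = 2^(N+1) * 4^((m+1)^2) * ((N:ℝ)+2)^(m+1) := by ring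
lemma cube (w : ℕ → ℕ → ℕ → ℝ)
    (hw : ∀ j N t, |w j N t| ≤ 1)
    (hshift : ∀ j N u b, b < 2 → w (j+1) (N+1) (2*u+b) = w j N u)
    (htop : ∀ N u, w 0 (N+1) (2*u) = w 0 (N+1) (2*u+1)) :
    ∀ p N, ∑ t ∈ Finset.range (2^N),
        (∑ j ∈ Finset.range N, w j N t * ee (t.testBit j)) ^ (2*p)
      ≤ (2:ℝ)^N * 4^(p^2) * ((N:ℝ)+1)^p := by
  intro p
  induction p using Nat.strong_induction_on with
  | _ p ihp =>
  intro N
  rcases Nat.eq_zero_or_pos p with rfl | hp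
  · norm_num
  induction N with
  | zero =>
      have h2p : 2*p ≠ 0 := by omega
      simp [zero_pow h2p]
  | succ N ihN =>
      set S : ℕ → ℝ := fun t => ∑ j ∈ Finset.range N, w j N t * ee (t.testBit j) with hS
      set c : ℕ → ℝ := fun u => w 0 (N+1) (2*u) with hc
      have hsh : ∀ j u b, b < 2 → w (j+1) (N+1) (2*u+b) = w j N u := fun j u b hb =>
        hshift j N u b hb
      have hbit : ∀ u b, b < 2 → ∀ j, (2*u+b).testBit (j+1) = u.testBit j := by
        intro u b hb j
        rw [Nat.testBit_add_one]
        congr 1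
        omega
      have key : ∀ u b, b < 2 →
          (∑ j ∈ Finset.range (N+1), w j (N+1) (2*u+b) * ee ((2*u+b).testBit j))
            = S u + c u * ee ((2*u+b).testBit 0) := by
        intro u b hb
        rw [Finset.sum_range_succ']
        congr 1
        · refine Finset.sum_congr rfl fun j _ => ?_
          rw [hsh j u b hb, hbit u b hb j]
        · congr 1
          rcases (by omega : b = 0 ∨ b = 1) with rfl | rfl
          · rfl
          · exact (htop N u).symm
      have key0 : ∀ u,
          (∑ j ∈ Finset.range (N+1), w j (N+1) (2*u) * ee ((2*u).testBit j))
            = S u + c u * ee ((2*u).testBit 0) := by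
        intro u
        have := key u 0 (by omega)
        simpa using this
      have hbit00 : ∀ u, (2*u).testBit 0 = false := by
        intro u
        rw [Nat.testBit_zero]
        simp [Nat.mul_mod_right]
      have hbit01 : ∀ u, (2*u+1).testBit 0 = true := by
        intro u
        rw [Nat.testBit_zero]
        have : (2*u+1) % 2 = 1 := by omega
        simp [this]
      have hstep : ∀ u ∈ Finset.range (2^N),
          (∑ j ∈ Finset.range (N+1), w j (N+1) (2*u) * ee ((2*u).testBit j))^(2*p)
          + (∑ j ∈ Finset.range (N+1), w j (N+1) (2*u+1) * ee ((2*u+1).testBit j))^(2*p)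
          ≤ ∑ i ∈ Finset.range (p+1), 2 * (((2*p).choose (2*i)) : ℝ) * (S u)^(2*i) := by
        intro u _
        rw [key0 u, key u 1 (by omega), hbit00 u, hbit01 u]
        have h1 : S u + c u * ee false = S u - c u := by simp [ee]; ring
        have h2 : S u + c u * ee true = S u + c u := by simp [ee]
        rw [h1, h2, add_comm]
        exact pair_pow_le p (S u) (c u) (hw _ _ _)
      have hmom : ∀ i ∈ Finset.range (p+1),
          ∑ u ∈ Finset.range (2^N), (S u)^(2*i) ≤ (2:ℝ)^N * 4^(i^2) * ((N:ℝ)+1)^i := by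
        intro i hi
        rcases Nat.lt_succ_iff_lt_or_eq.mp (Finset.mem_range.mp hi) with hi' | rfl
        · exact ihp i hi' N
        · exact ihN
      have h2pow : (2:ℕ)^(N+1) = 2*2^N := by rw [pow_succ]; ring
      rw [h2pow, sum_range_two_mul]
      calc ∑ u ∈ Finset.range (2^N),
            ((∑ j ∈ Finset.range (N+1), w j (N+1) (2*u) * ee ((2*u).testBit j))^(2*p)
            + (∑ j ∈ Finset.range (N+1), w j (N+1) (2*u+1) * ee ((2*u+1).testBit j))^(2*p))
          ≤ ∑ u ∈ Finset.range (2^N), ∑ i ∈ Finset.range (p+1),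
              2 * (((2*p).choose (2*i)) : ℝ) * (S u)^(2*i) := Finset.sum_le_sum hstep
        _ = ∑ i ∈ Finset.range (p+1), ∑ u ∈ Finset.range (2^N),
              2 * (((2*p).choose (2*i)) : ℝ) * (S u)^(2*i) := Finset.sum_comm
        _ = ∑ i ∈ Finset.range (p+1),
              2 * (((2*p).choose (2*i)) : ℝ) * ∑ u ∈ Finset.range (2^N), (S u)^(2*i) := by
            refine Finset.sum_congr rfl fun i _ => ?_
            rw [Finset.mul_sum]
        _ ≤ ∑ i ∈ Finset.range (p+1),
              2 * (((2*p).choose (2*i)) : ℝ) * ((2:ℝ)^N * 4^(i^2) * ((N:ℝ)+1)^i) := by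
            refine Finset.sum_le_sum fun i hi => ?_
            exact mul_le_mul_of_nonneg_left (hmom i hi) (by positivity)
        _ ≤ (2:ℝ)^(N+1) * 4^(p^2) * ((N:ℝ)+2)^p := arith_step p N hp
        _ = (2:ℝ)^(N+1) * 4^(p^2) * ((((N+1):ℕ):ℝ)+1)^p := by push_cast; ring_nf
/-- On the dyadic cell `[m·2⁻ᴹ, (m+1)·2⁻ᴹ)`, the Rademacher function `rad j` (for `j < M`)
is constant, with value given by a binary digit of `m`. -/
lemma rad_on_cell (M j m : ℕ) (hj : j < M) (x : ℝ)
    (hx : (m:ℝ) * ((2:ℝ)^M)⁻¹ ≤ x) (hx' : x < ((m:ℝ)+1) * ((2:ℝ)^M)⁻¹) :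
    rad j x = ee (m.testBit (M - 1 - j)) := by
  set a := M - 1 - j with ha
  have hMa : M = (j+1) + a := by omega
  have h2a : (0:ℝ) < 2^a := by positivity
  have h2j : (0:ℝ) < 2^(j+1) := by positivity
  have h2M : ((2:ℝ)^M) = 2^(j+1) * 2^a := by rw [hMa, pow_add]
  have hfloor : ⌊(2:ℝ)^(j+1) * x⌋ = ((m / 2^a : ℕ) : ℤ) := by
    rw [Int.floor_eq_iff]
    constructor
    · have h1 : ((m / 2^a : ℕ) : ℝ) ≤ (m:ℝ) / 2^a := by
        calc ((m / 2^a : ℕ) : ℝ) ≤ (m:ℝ) / ((2^a : ℕ):ℝ) := Nat.cast_div_le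
          _ = (m:ℝ) / 2^a := by push_cast; ring
      have h2 : (m:ℝ) / 2^a ≤ 2^(j+1) * x := by
        rw [div_le_iff₀ h2a] at *
        calc (m:ℝ) = (m * ((2:ℝ)^M)⁻¹) * 2^(j+1) * 2^a := by
              field_simp [h2M]; rw [h2M]; ring
          _ ≤ (x * 2^(j+1)) * 2^a := by
              have := mul_le_mul_of_nonneg_right (mul_le_mul_of_nonneg_right hx h2j.le) h2a.le
              calc (m * ((2:ℝ)^M)⁻¹) * 2^(j+1) * 2^a ≤ x * 2^(j+1) * 2^a := this
                _ = (x * 2^(j+1)) * 2^a := by ring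
          _ = 2^(j+1) * x * 2^a := by ring
      exact_mod_cast le_trans h1 h2
    · have hdm := Nat.div_add_mod m (2^a)
      have hml : m % 2^a < 2^a := Nat.mod_lt m (by positivity)
      have hnat : m + 1 ≤ (m / 2^a + 1) * 2^a := by
        have := Nat.div_add_mod m (2^a); nlinarith [hml]
      have h3 : 2^(j+1) * x < ((m:ℝ)+1) / 2^a := by
        rw [lt_div_iff₀ h2a]
        calc 2^(j+1) * x * 2^a < 2^(j+1) * (((m:ℝ)+1) * ((2:ℝ)^M)⁻¹) * 2^a := by
              have := mul_lt_mul_of_pos_left hx' h2j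
              exact mul_lt_mul_of_pos_right this h2a
          _ = ((m:ℝ)+1) := by
              rw [h2M]; field_simp
      have h4 : ((m:ℝ)+1) / 2^a ≤ ((m / 2^a : ℕ) : ℝ) + 1 := by
        rw [div_le_iff₀ h2a]
        have : ((m:ℝ)+1) ≤ (((m / 2^a + 1) * 2^a : ℕ) : ℝ) := by exact_mod_cast hnat
        calc ((m:ℝ)+1) ≤ (((m / 2^a + 1) * 2^a : ℕ) : ℝ) := this
          _ = (((m / 2^a : ℕ) : ℝ) + 1) * 2^a := by push_cast; ring
      have := lt_of_lt_of_le h3 h4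
      exact_mod_cast this
  unfold rad
  rw [hfloor]
  have hodd : Odd ((m / 2^a : ℕ) : ℤ) ↔ (m / 2^a) % 2 = 1 := by
    rw [Int.odd_coe_nat, Nat.odd_iff]
  have htb : m.testBit a = decide (m / 2^a % 2 = 1) := Nat.testBit_eq_decide_div_mod_eq
  by_cases hcase : (m / 2^a) % 2 = 1
  · rw [if_pos (hodd.mpr hcase)]
    rw [htb]; simp [hcase, ee]
  · rw [if_neg (fun hh => hcase (hodd.mp hh))]
    rw [htb]; simp [hcase, ee]

lemma Ico_biUnion (n : ℕ) (α c : ℝ) (hc : 0 < c) :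
    ⋃ i ∈ Finset.range n, Set.Ico (α + (i:ℝ)*c) (α + ((i:ℝ)+1)*c) = Set.Ico α (α + (n:ℝ)*c) := by
  induction n with
  | zero => simp
  | succ n ih =>
      rw [Finset.range_add_one, Finset.set_biUnion_insert, ih, Set.union_comm,
        Set.Ico_union_Ico_eq_Ico]
      · push_cast; ring_nf
      · nlinarith [Nat.cast_nonneg (α := ℝ) n]
      · push_cast; nlinarith

lemma Ico_disj (α c : ℝ) (hc : 0 < c) :
    ∀ i j : ℕ, i ≠ j → Disjoint (Set.Ico (α + (i:ℝ)*c) (α + ((i:ℝ)+1)*c))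
      (Set.Ico (α + (j:ℝ)*c) (α + ((j:ℝ)+1)*c)) := by
  have key : ∀ i j : ℕ, i < j → Disjoint (Set.Ico (α + (i:ℝ)*c) (α + ((i:ℝ)+1)*c))
      (Set.Ico (α + (j:ℝ)*c) (α + ((j:ℝ)+1)*c)) := by
    intro i j hij
    apply Set.Ico_disjoint_Ico.mpr
    have hij' : (i:ℝ) + 1 ≤ (j:ℝ) := by exact_mod_cast hij
    have h1 : α + ((i:ℝ)+1)*c ≤ α + (j:ℝ)*c := by nlinarith
    calc min (α + ((i:ℝ)+1)*c) (α + ((j:ℝ)+1)*c) ≤ α + ((i:ℝ)+1)*c := min_le_left _ _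
      _ ≤ α + (j:ℝ)*c := h1
      _ ≤ max (α + (i:ℝ)*c) (α + (j:ℝ)*c) := le_max_right _ _
  intro i j hij
  rcases lt_or_gt_of_ne hij with h | h
  · exact key i j h
  · exact (key j i h).symm

lemma measurable_rad (k : ℕ) : Measurable (rad k) := by
  unfold rad
  have hfl : Measurable fun x : ℝ => ⌊(2:ℝ)^(k+1) * x⌋ :=
    Int.measurable_floor.comp (measurable_const_mul _)
  have hset : MeasurableSet {x : ℝ | Odd ⌊(2:ℝ)^(k+1) * x⌋} := by
    have : {x : ℝ | Odd ⌊(2:ℝ)^(k+1) * x⌋} = (fun x : ℝ => ⌊(2:ℝ)^(k+1) * x⌋) ⁻¹' {z | Odd z} :=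
      rfl
    rw [this]
    exact hfl (MeasurableSet.of_discrete)
  exact Measurable.ite hset measurable_const measurable_const

lemma abs_sqrt_pow (δ S : ℝ) (hδ : 0 ≤ δ) (q : ℕ) :
    |Real.sqrt (2*δ) * S| ^ (2*q) = (2*δ)^q * S^(2*q) := by
  rw [pow_mul, pow_mul, sq_abs, mul_pow, Real.sq_sqrt (by linarith), mul_pow]
def wv (v s : ℝ) (Ntot j t : ℕ) : ℝ :=
  if (if j + 1 = Ntot then s else ee (t.testBit (j+1))) = v then 1 else 0

def Sv (v s : ℝ) (Ntot t : ℕ) : ℝ :=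
  ∑ j ∈ Finset.range Ntot, wv v s Ntot j t * ee (t.testBit j)

lemma Sv_moment (v s : ℝ) (p Ntot : ℕ) :
    ∑ t ∈ Finset.range (2^Ntot), (Sv v s Ntot t)^(2*p)
      ≤ (2:ℝ)^Ntot * 4^(p^2) * ((Ntot:ℝ)+1)^p := by
  have hw : ∀ j N t, |wv v s N j t| ≤ 1 := by
    intro j N t; unfold wv; split_ifs <;> norm_num
  have hshift : ∀ j N u b, b < 2 → wv v s (N+1) (j+1) (2*u+b) = wv v s N j u := by
    intro j N u b hb
    unfold wv
    have h2 : (2*u+b).testBit (j+1+1) = u.testBit (j+1) := by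
      rw [Nat.testBit_add_one]; congr 1; omega
    by_cases hc : j + 1 = N
    · have e1 : (if j + 1 + 1 = N + 1 then s else ee ((2*u+b).testBit (j+1+1))) = s :=
        if_pos (by omega)
      have e2 : (if j + 1 = N then s else ee (u.testBit (j+1))) = s := if_pos hc
      rw [e1, e2]
    · have e1 : (if j + 1 + 1 = N + 1 then s else ee ((2*u+b).testBit (j+1+1)))
          = ee ((2*u+b).testBit (j+1+1)) := if_neg (by omega)
      have e2 : (if j + 1 = N then s else ee (u.testBit (j+1))) = ee (u.testBit (j+1)) :=
        if_neg hc
      rw [e1, e2, h2]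
  have htop : ∀ N u, wv v s (N+1) 0 (2*u) = wv v s (N+1) 0 (2*u+1) := by
    intro N u
    unfold wv
    by_cases hc : (0:ℕ) + 1 = N + 1
    · rw [if_pos hc, if_pos hc]
    · rw [if_neg hc, if_neg hc]
      have h2 : ∀ b, b < 2 → (2*u+b).testBit (0+1) = u.testBit 0 := by
        intro b hb; rw [Nat.testBit_add_one]; congr 1; omega
      have h0 := h2 0 (by omega)
      simp only [Nat.add_zero] at h0
      rw [h2 1 (by omega), h0]
  simpa [Sv] using cube (fun j N t => wv v s N j t) hw hshift htop p Ntot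

lemma Sv_bound (v s δ : ℝ) (hδ : 0 < δ) (q N : ℕ) (hN : 1 ≤ N) :
    ((2:ℝ)^N)⁻¹ * ∑ t ∈ Finset.range (2^N), (2*δ)^q * (Sv v s N t)^(2*q)
      ≤ 4^(q^2) * 4^q * ((N:ℝ)*δ)^q := by
  have h2N : (0:ℝ) < 2^N := by positivity
  have h1 : ∑ t ∈ Finset.range (2^N), (2*δ)^q * (Sv v s N t)^(2*q)
      = (2*δ)^q * ∑ t ∈ Finset.range (2^N), (Sv v s N t)^(2*q) := by
    rw [Finset.mul_sum]
  have h2 := Sv_moment v s q N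
  have hδ2 : (0:ℝ) ≤ (2*δ)^q := by positivity
  have h3 : ((2:ℝ)^N)⁻¹ * ((2*δ)^q * ((2:ℝ)^N * 4^(q^2) * ((N:ℝ)+1)^q))
      = (2*δ)^q * 4^(q^2) * ((N:ℝ)+1)^q := by
    field_simp
  have hN1 : ((N:ℝ)+1) ≤ 2*(N:ℝ) := by
    have : (1:ℝ) ≤ (N:ℝ) := by exact_mod_cast hN
    linarith
  have h4 : ((N:ℝ)+1)^q ≤ (2*(N:ℝ))^q := by
    apply pow_le_pow_left₀ (by positivity) hN1
  have h5 : (2*δ)^q * 4^(q^2) * ((N:ℝ)+1)^q ≤ (2*δ)^q * 4^(q^2) * (2*(N:ℝ))^q := by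
    apply mul_le_mul_of_nonneg_left h4 (by positivity)
  have h6 : (2*δ)^q * 4^(q^2) * (2*(N:ℝ))^q = 4^(q^2) * 4^q * ((N:ℝ)*δ)^q := by
    have e : ((2*δ)*(2*(N:ℝ)))^q = (2*δ)^q * (2*(N:ℝ))^q := mul_pow _ _ _
    have e2 : ((4:ℝ)*((N:ℝ)*δ))^q = 4^q * ((N:ℝ)*δ)^q := mul_pow _ _ _
    have e3 : (2*δ)*(2*(N:ℝ)) = 4*((N:ℝ)*δ) := by ring
    calc (2*δ)^q * 4^(q^2) * (2*(N:ℝ))^q = 4^(q^2) * ((2*δ)*(2*(N:ℝ)))^q := by rw [e]; ring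
      _ = 4^(q^2) * (4^q * ((N:ℝ)*δ)^q) := by rw [e3, e2]
      _ = 4^(q^2) * 4^q * ((N:ℝ)*δ)^q := by ring
  calc ((2:ℝ)^N)⁻¹ * ∑ t ∈ Finset.range (2^N), (2*δ)^q * (Sv v s N t)^(2*q)
      = ((2:ℝ)^N)⁻¹ * ((2*δ)^q * ∑ t ∈ Finset.range (2^N), (Sv v s N t)^(2*q)) := by rw [h1]
    _ ≤ ((2:ℝ)^N)⁻¹ * ((2*δ)^q * ((2:ℝ)^N * 4^(q^2) * ((N:ℝ)+1)^q)) := by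
        apply mul_le_mul_of_nonneg_left ?_ (by positivity)
        exact mul_le_mul_of_nonneg_left h2 hδ2
    _ = (2*δ)^q * 4^(q^2) * ((N:ℝ)+1)^q := h3
    _ ≤ (2*δ)^q * 4^(q^2) * (2*(N:ℝ))^q := h5
    _ = 4^(q^2) * 4^q * ((N:ℝ)*δ)^q := h6

lemma Sv_nonneg_terms (v s δ : ℝ) (hδ : 0 ≤ δ) (q N t : ℕ) :
    0 ≤ (2*δ)^q * (Sv v s N t)^(2*q) := by
  apply mul_nonneg (by positivity)
  rw [pow_mul]
  positivity

lemma walk_on_cell (v δ : ℝ) (N n : ℕ) (hN : 1 ≤ N) (m : ℕ) (x : ℝ)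
    (hx : (m:ℝ) * ((2:ℝ)^(n*N+N+1))⁻¹ ≤ x) (hx' : x < ((m:ℝ)+1) * ((2:ℝ)^(n*N+N+1))⁻¹) :
    ∑ l ∈ Finset.Icc 1 N,
        (if rad (n*N+l-1) x = v then 1 else 0) * rad (n*N+l) x * Real.sqrt (2*δ)
      = Real.sqrt (2*δ) * Sv v (rad (n*N) x) N (m % 2^N) := by
  have hbits : ∀ i, 1 ≤ i → i ≤ N → rad (n*N+i) x = ee (m.testBit (N - i)) := by
    intro i hi1 hiN
    have h := rad_on_cell (n*N+N+1) (n*N+i) m (by omega) x hx hx'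
    rwa [show n*N+N+1 - 1 - (n*N+i) = N - i by omega] at h
  have htmod : ∀ i, i < N → (m % 2^N).testBit i = m.testBit i := by
    intro i hi
    rw [Nat.testBit_mod_two_pow]
    simp [hi]
  rw [Sv, Finset.mul_sum]
  refine Finset.sum_nbij' (fun l => N - l) (fun j => N - j) ?_ ?_ ?_ ?_ ?_
  · intro l hl
    simp only [Finset.mem_Icc] at hl
    simp only [Finset.mem_range]
    omega
  · intro j hj
    simp only [Finset.mem_range] at hj
    simp only [Finset.mem_Icc]
    omega
  · intro l hl
    simp only [Finset.mem_Icc] at hl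
    show N - (N - l) = l
    omega
  · intro j hj
    simp only [Finset.mem_range] at hj
    show N - (N - j) = j
    omega
  · intro l hl
    simp only [Finset.mem_Icc] at hl
    have hNl : N - l < N := by omega
    have hstep : rad (n*N+l) x = ee ((m % 2^N).testBit (N - l)) := by
      rw [hbits l hl.1 hl.2, htmod _ hNl]
    have hind : (if rad (n*N+l-1) x = v then (1:ℝ) else 0)
        = wv v (rad (n*N) x) N (N-l) (m % 2^N) := by
      unfold wv
      rcases eq_or_lt_of_le hl.1 with h1 | h2
      · -- l = 1
        have hl1 : l = 1 := h1.symm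
        subst hl1
        rw [if_pos (by omega : (N-1) + 1 = N)]
        have : n*N+1-1 = n*N := by omega
        rw [this]
      · -- l ≥ 2
        have hl2 : 2 ≤ l := h2
        rw [if_neg (by omega : ¬ ((N-l) + 1 = N))]
        have hprev : rad (n*N+l-1) x = ee (m.testBit (N - (l-1))) := by
          have := hbits (l-1) (by omega) (by omega)
          rwa [show n*N+(l-1) = n*N+l-1 by omega] at this
        have hidx : N - (l-1) = (N-l)+1 := by omega
        have hlt : (N-l)+1 < N := by omega
        rw [hprev, hidx, htmod _ hlt]
    rw [hstep, hind]
    ring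
lemma abs_rad (k : ℕ) (x : ℝ) : |rad k x| = 1 := by
  unfold rad; split <;> simp

lemma integrableOn_of_bound (ψ : ℝ → ℝ) (s : Set ℝ) (μ : MeasureTheory.Measure ℝ)
    (hμ : μ s ≠ ⊤) (hmeas : Measurable ψ) (B : ℝ) (hB : ∀ x, ‖ψ x‖ ≤ B) :
    MeasureTheory.IntegrableOn ψ s μ :=
  MeasureTheory.Measure.integrableOn_of_bounded hμ hmeas.aestronglyMeasurable
    (MeasureTheory.ae_of_all _ hB)

lemma integral_Ico_const_of_eq (a b c : ℝ) (hab : a ≤ b) (ψ : ℝ → ℝ)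
    (hconst : ∀ x ∈ Set.Ico a b, ψ x = c) :
    ∫ x in Set.Ico a b, ψ x = (b - a) * c := by
  rw [MeasureTheory.setIntegral_congr_fun measurableSet_Ico hconst,
    MeasureTheory.setIntegral_const, Real.volume_real_Ico_of_le hab, smul_eq_mul]

lemma integral_Ico_blocks (nb : ℕ) (α c : ℝ) (hc : 0 < c) (ψ : ℝ → ℝ)
    (hmeas : Measurable ψ) (B : ℝ) (hB : ∀ x, ‖ψ x‖ ≤ B) :
    ∫ x in Set.Ico α (α + (nb:ℝ)*c), ψ x
      = ∑ i ∈ Finset.range nb, ∫ x in Set.Ico (α + (i:ℝ)*c) (α + ((i:ℝ)+1)*c), ψ x := by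
  rw [← Ico_biUnion nb α c hc]
  exact MeasureTheory.integral_biUnion_finset _ (fun i _ => measurableSet_Ico)
    (fun i _ j _ hij => Ico_disj α c hc i j hij)
    (fun i _ => integrableOn_of_bound ψ _ _ (by rw [Real.volume_Ico]; exact ENNReal.ofReal_ne_top)
      hmeas B hB)

set_option maxHeartbeats 2000000 in
lemma main_bound (q : ℕ) (hq : 1 ≤ q) (δ : ℝ) (hδ : 0 < δ) (N : ℕ) (hN : 1 ≤ N)
    (n : ℕ) (v : ℝ) :
    ∀ᵐ x ∂P, (P[fun y => |∑ l ∈ Finset.Icc 1 N,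
        (if rad (n*N+l-1) y = v then 1 else 0) * rad (n*N+l) y * Real.sqrt (2*δ)| ^ (2*q)
      | Ffil (n*N)]) x ≤ 4^(q^2) * 4^q * ((N:ℝ)*δ)^q := by
  classical
  set f : ℝ → ℝ := fun y => |∑ l ∈ Finset.Icc 1 N,
      (if rad (n*N+l-1) y = v then 1 else 0) * rad (n*N+l) y * Real.sqrt (2*δ)| ^ (2*q)
    with hf
  set G : ℝ → ℝ := fun s =>
      ((2:ℝ)^N)⁻¹ * ∑ t ∈ Finset.range (2^N), (2*δ)^q * (Sv v s N t)^(2*q) with hG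
  set g : ℝ → ℝ := fun x => G (rad (n*N) x) with hg
  set hh : ℝ := ((2:ℝ)^(n*N+N+1))⁻¹ with hhh
  set uu : ℝ := ((2:ℝ)^(n*N+1))⁻¹ with huu
  have hhpos : (0:ℝ) < hh := by rw [hhh]; positivity
  have hupos : (0:ℝ) < uu := by rw [huu]; positivity
  have huh : uu = (2:ℝ)^N * hh := by
    have h1 : (2:ℝ)^(n*N+N+1) = 2^N * 2^(n*N+1) := by
      rw [← pow_add]; congr 1; omega
    rw [huu, hhh, h1, mul_inv, ← mul_assoc,
      mul_inv_cancel₀ (by positivity : ((2:ℝ)^N) ≠ 0), one_mul]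
  -- σ-algebra facts
  have hm : Ffil (n*N) ≤ (inferInstance : MeasurableSpace ℝ) :=
    iSup₂_le fun i _ => (measurable_rad i).comap_le
  haveI hPfin : IsFiniteMeasure P := by
    constructor
    rw [P, MeasureTheory.Measure.restrict_apply_univ, Real.volume_Ico]
    exact ENNReal.ofReal_lt_top
  haveI : SigmaFinite (P.trim hm) := by
    haveI : IsFiniteMeasure (P.trim hm) := by
      constructor
      rw [MeasureTheory.trim_measurableSet_eq hm MeasurableSet.univ]
      exact measure_lt_top P _
    infer_instance
  -- measurability of f
  have hfm : Measurable f := by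
    apply Measurable.pow_const
    apply Measurable.abs
    apply Finset.measurable_sum
    intro l _
    apply Measurable.mul_const
    apply Measurable.mul
    · exact Measurable.ite ((measurable_rad _) (measurableSet_singleton v))
        measurable_const measurable_const
    · exact measurable_rad _
  have hfnn : ∀ x, 0 ≤ f x := by
    intro x; rw [hf]; positivity
  set Bf : ℝ := ((N:ℝ) * Real.sqrt (2*δ))^(2*q) with hBf
  have hfb : ∀ x, f x ≤ Bf := by
    intro x
    rw [hf, hBf]
    apply pow_le_pow_left₀ (abs_nonneg _)
    calc |∑ l ∈ Finset.Icc 1 N,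
          (if rad (n*N+l-1) x = v then 1 else 0) * rad (n*N+l) x * Real.sqrt (2*δ)|
        ≤ ∑ l ∈ Finset.Icc 1 N,
          |(if rad (n*N+l-1) x = v then 1 else 0) * rad (n*N+l) x * Real.sqrt (2*δ)| :=
          Finset.abs_sum_le_sum_abs _ _
      _ ≤ ∑ _l ∈ Finset.Icc 1 N, Real.sqrt (2*δ) := by
          apply Finset.sum_le_sum
          intro l _
          rw [abs_mul, abs_mul]
          have h1 : |if rad (n*N+l-1) x = v then (1:ℝ) else 0| ≤ 1 := by
            split <;> norm_num
          have h2 : |rad (n*N+l) x| = 1 := abs_rad _ _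
          have h3 : |Real.sqrt (2*δ)| = Real.sqrt (2*δ) := abs_of_nonneg (Real.sqrt_nonneg _)
          rw [h2, h3]
          nlinarith [Real.sqrt_nonneg (2*δ), abs_nonneg (if rad (n*N+l-1) x = v then (1:ℝ) else 0)]
      _ = (N:ℝ) * Real.sqrt (2*δ) := by
          rw [Finset.sum_const, Nat.card_Icc, nsmul_eq_mul]
          norm_num
  have hBfnn : 0 ≤ Bf := by rw [hBf]; positivity
  have hfnorm : ∀ x, ‖f x‖ ≤ Bf := by
    intro x; rw [Real.norm_eq_abs, abs_of_nonneg (hfnn x)]; exact hfb x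
  have hfi : Integrable f P :=
    (MeasureTheory.integrable_const Bf).mono' hfm.aestronglyMeasurable
      (MeasureTheory.ae_of_all _ hfnorm)
  -- measurability of G and g
  have hGm : Measurable G := by
    apply Measurable.const_mul
    apply Finset.measurable_sum
    intro t _
    apply Measurable.const_mul
    apply Measurable.pow_const
    apply Finset.measurable_sum
    intro j _
    apply Measurable.mul_const
    unfold wv
    by_cases hc : j + 1 = N
    · simp only [if_pos hc]
      exact Measurable.ite (measurableSet_eq) measurable_const measurable_const
    · simp only [if_neg hc]
      exact measurable_const
  have hgm : Measurable g := hGm.comp (measurable_rad _)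
  have hradF : Measurable[Ffil (n*N)] (rad (n*N)) := by
    rw [measurable_iff_comap_le]
    show MeasurableSpace.comap (rad (n*N)) inferInstance
      ≤ ⨆ i ∈ Finset.Iic (n*N), MeasurableSpace.comap (rad i) inferInstance
    exact le_iSup₂ (f := fun i (_ : i ∈ Finset.Iic (n*N)) =>
      MeasurableSpace.comap (rad i) inferInstance) (n*N) (Finset.mem_Iic.mpr le_rfl)
  have hgF : Measurable[Ffil (n*N)] g := hGm.comp hradF
  have hgsm : AEStronglyMeasurable[Ffil (n*N)] g P :=
    MeasureTheory.StronglyMeasurable.aestronglyMeasurable hgF.stronglyMeasurable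
  -- bounds for g
  have hgb : ∀ x, g x ≤ 4^(q^2) * 4^q * ((N:ℝ)*δ)^q := fun x =>
    Sv_bound v (rad (n*N) x) δ hδ q N hN
  have hgnn : ∀ x, 0 ≤ g x := by
    intro x
    rw [hg, hG]
    apply mul_nonneg (by positivity)
    exact Finset.sum_nonneg fun t _ => Sv_nonneg_terms v _ δ hδ.le q N t
  have hgnorm : ∀ x, ‖g x‖ ≤ 4^(q^2) * 4^q * ((N:ℝ)*δ)^q := by
    intro x; rw [Real.norm_eq_abs, abs_of_nonneg (hgnn x)]; exact hgb x
  -- pointwise formula for f on generation-M cells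
  have hfcell : ∀ m : ℕ, ∀ x, (m:ℝ) * hh ≤ x → x < ((m:ℝ)+1) * hh →
      f x = (2*δ)^q * (Sv v (rad (n*N) x) N (m % 2^N))^(2*q) := by
    intro m x h1 h2
    rw [hf]
    simp only
    rw [walk_on_cell v δ N n hN m x h1 h2, abs_sqrt_pow δ _ hδ.le q]
  -- rad (n*N) is constant on generation-(n*N+1) cells
  have hradJ : ∀ i : ℕ, i ≤ n*N → ∀ r : ℕ, ∀ x, (r:ℝ) * uu ≤ x → x < ((r:ℝ)+1) * uu →
      rad i x = ee (r.testBit (n*N - i)) := by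
    intro i hi r x h1 h2
    have h := rad_on_cell (n*N+1) i r (by omega) x h1 h2
    rwa [show n*N+1-1-i = n*N - i by omega] at h
  -- integral of f over one generation-(n*N+1) cell equals integral of g
  have hIr : ∀ r : ℕ,
      (∫ x in Set.Ico ((r:ℝ)*uu) (((r:ℝ)+1)*uu), f x)
        = ∫ x in Set.Ico ((r:ℝ)*uu) (((r:ℝ)+1)*uu), g x := by
    intro r
    set sr : ℝ := ee (r.testBit 0) with hsr
    have hJsub : ∀ x, (r:ℝ)*uu ≤ x → x < ((r:ℝ)+1)*uu → rad (n*N) x = sr := by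
      intro x h1 h2
      have := hradJ (n*N) le_rfl r x h1 h2
      rwa [Nat.sub_self] at this
    have hend : ((r:ℝ)+1)*uu = (r:ℝ)*uu + ((2^N : ℕ):ℝ)*hh := by
      rw [huh]; push_cast; ring
    -- LHS: decompose into 2^N subcells
    have hblocks := integral_Ico_blocks (2^N) ((r:ℝ)*uu) hh hhpos f hfm Bf hfnorm
    have hsubcell : ∀ t ∈ Finset.range (2^N),
        (∫ x in Set.Ico ((r:ℝ)*uu + (t:ℝ)*hh) ((r:ℝ)*uu + ((t:ℝ)+1)*hh), f x)
          = hh * ((2*δ)^q * (Sv v sr N t)^(2*q)) := by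
      intro t ht
      have htN : t < 2^N := Finset.mem_range.mp ht
      set m : ℕ := r * 2^N + t with hm'
      have he1 : (r:ℝ)*uu + (t:ℝ)*hh = (m:ℝ) * hh := by
        rw [hm', huh]; push_cast; ring
      have he2 : (r:ℝ)*uu + ((t:ℝ)+1)*hh = ((m:ℝ)+1) * hh := by
        rw [hm', huh]; push_cast; ring
      have hmod : m % 2^N = t := by
        rw [hm', Nat.mul_comm r (2^N)]
        rw [Nat.mul_add_mod]
        exact Nat.mod_eq_of_lt htN
      rw [he1, he2]
      have hconst : ∀ x ∈ Set.Ico ((m:ℝ)*hh) (((m:ℝ)+1)*hh),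
          f x = (2*δ)^q * (Sv v sr N t)^(2*q) := by
        intro x hx
        have hx1 : (m:ℝ)*hh ≤ x := hx.1
        have hx2 : x < ((m:ℝ)+1)*hh := hx.2
        have hxJ1 : (r:ℝ)*uu ≤ x := by rw [← he1] at hx1; nlinarith [Nat.cast_nonneg (α := ℝ) t]
        have hxJ2 : x < ((r:ℝ)+1)*uu := by
          rw [← he2] at hx2
          have htle : (t:ℝ)+1 ≤ ((2^N:ℕ):ℝ) := by exact_mod_cast htN
          nlinarith [hend]
        rw [hfcell m x hx1 hx2, hJsub x hxJ1 hxJ2, hmod]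
      have := integral_Ico_const_of_eq ((m:ℝ)*hh) (((m:ℝ)+1)*hh)
        ((2*δ)^q * (Sv v sr N t)^(2*q)) (by nlinarith) f hconst
      rw [this, show ((m:ℝ)+1)*hh - (m:ℝ)*hh = hh by ring]
    -- RHS: g is constant on the cell
    have hgconst : ∀ x ∈ Set.Ico ((r:ℝ)*uu) (((r:ℝ)+1)*uu), g x = G sr := by
      intro x hx
      rw [hg]
      simp only
      rw [hJsub x hx.1 hx.2]
    have hRHS : (∫ x in Set.Ico ((r:ℝ)*uu) (((r:ℝ)+1)*uu), g x)
        = uu * G sr := by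
      have := integral_Ico_const_of_eq ((r:ℝ)*uu) (((r:ℝ)+1)*uu) (G sr)
        (by nlinarith) g hgconst
      rw [this, show ((r:ℝ)+1)*uu - (r:ℝ)*uu = uu by ring]
    rw [hRHS, hend, hblocks, Finset.sum_congr rfl hsubcell, ← Finset.mul_sum, hG]
    simp only
    rw [huh]
    have hcancel : (2:ℝ)^N * ((2:ℝ)^N)⁻¹ = 1 := mul_inv_cancel₀ (by positivity)
    calc hh * ∑ t ∈ Finset.range (2^N), (2*δ)^q * Sv v sr N t ^ (2*q)
        = ((2:ℝ)^N * ((2:ℝ)^N)⁻¹)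
            * (hh * ∑ t ∈ Finset.range (2^N), (2*δ)^q * Sv v sr N t ^ (2*q)) := by
          rw [hcancel, one_mul]
      _ = (2:ℝ)^N * hh
            * (((2:ℝ)^N)⁻¹ * ∑ t ∈ Finset.range (2^N), (2*δ)^q * Sv v sr N t ^ (2*q)) := by
          ring
  -- set-integral equality over Ffil-measurable sets
  have hseteq : ∀ s : Set ℝ, MeasurableSet[Ffil (n*N)] s →
      ∫ x in s, g x ∂P = ∫ x in s, f x ∂P := by
    intro s hs
    -- s is a preimage under Φ
    have hcomap : Ffil (n*N) ≤ MeasurableSpace.comap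
        (fun x (i : Fin (n*N+1)) => rad i x) inferInstance := by
      refine iSup₂_le fun i hi => ?_
      have hi' : i < n*N + 1 := Nat.lt_succ_of_le (Finset.mem_Iic.mp hi)
      have heq : rad i = (fun vv : Fin (n*N+1) → ℝ => vv ⟨i, hi'⟩)
          ∘ (fun x (i : Fin (n*N+1)) => rad i x) := rfl
      rw [heq, ← MeasurableSpace.comap_comp]
      exact MeasurableSpace.comap_mono ((measurable_pi_apply _).comap_le)
    obtain ⟨T, -, hTs⟩ := MeasurableSpace.measurableSet_comap.mp (hcomap s hs)
    have hmem : ∀ r : ℕ, ∀ x, (r:ℝ)*uu ≤ x → x < ((r:ℝ)+1)*uu →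
        (x ∈ s ↔ ((r:ℝ)*uu) ∈ s) := by
      intro r x h1 h2
      have hrpt1 : (r:ℝ)*uu ≤ (r:ℝ)*uu := le_rfl
      have hrpt2 : (r:ℝ)*uu < ((r:ℝ)+1)*uu := by nlinarith
      have hPhi : (fun i : Fin (n*N+1) => rad i ((r:ℝ)*uu))
          = (fun i : Fin (n*N+1) => rad i x) := by
        funext i
        have hi : (i:ℕ) ≤ n*N := Nat.lt_succ_iff.mp i.isLt
        rw [hradJ i hi r x h1 h2, hradJ i hi r ((r:ℝ)*uu) hrpt1 hrpt2]
      rw [← hTs]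
      show (fun i : Fin (n*N+1) => rad i x) ∈ {vv | vv ∈ T}
        ↔ (fun i : Fin (n*N+1) => rad i ((r:ℝ)*uu)) ∈ {vv | vv ∈ T}
      rw [hPhi]
    set R : Finset ℕ := (Finset.range (2^(n*N+1))).filter (fun r => ((r:ℝ)*uu) ∈ s) with hR
    have hI01 : Set.Ico (0:ℝ) 1 = ⋃ r ∈ Finset.range (2^(n*N+1)),
        Set.Ico ((r:ℝ)*uu) (((r:ℝ)+1)*uu) := by
      have := Ico_biUnion (2^(n*N+1)) 0 uu hupos
      simp only [zero_add] at this
      rw [this]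
      have h1 : ((2^(n*N+1):ℕ):ℝ) * uu = 1 := by
        rw [huu]; push_cast
        rw [mul_inv_cancel₀ (by positivity)]
      rw [h1]
    have hdecomp : s ∩ Set.Ico (0:ℝ) 1 = ⋃ r ∈ R, Set.Ico ((r:ℝ)*uu) (((r:ℝ)+1)*uu) := by
      ext x
      simp only [Set.mem_inter_iff, Set.mem_iUnion, Finset.mem_filter, Finset.mem_range,
        exists_prop, hR]
      constructor
      · rintro ⟨hxs, hx01⟩
        rw [hI01] at hx01
        simp only [Set.mem_iUnion, Finset.mem_range, exists_prop] at hx01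
        obtain ⟨r, hr, hxr⟩ := hx01
        exact ⟨r, ⟨hr, (hmem r x hxr.1 hxr.2).mp hxs⟩, hxr⟩
      · rintro ⟨r, ⟨hr, hrs⟩, hxr⟩
        constructor
        · exact (hmem r x hxr.1 hxr.2).mpr hrs
        · rw [hI01]
          simp only [Set.mem_iUnion, Finset.mem_range, exists_prop]
          exact ⟨r, hr, hxr⟩
    have hstep : ∀ ψ : ℝ → ℝ, Measurable ψ → ∀ B : ℝ, (∀ x, ‖ψ x‖ ≤ B) →
        ∫ x in s, ψ x ∂P = ∑ r ∈ R, ∫ x in Set.Ico ((r:ℝ)*uu) (((r:ℝ)+1)*uu), ψ x := by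
      intro ψ hψ B hB
      have hPs : P.restrict s = MeasureTheory.volume.restrict (s ∩ Set.Ico (0:ℝ) 1) := by
        show (MeasureTheory.volume.restrict (Set.Ico (0:ℝ) 1)).restrict s = _
        exact MeasureTheory.Measure.restrict_restrict (hm s hs)
      rw [hPs, hdecomp]
      exact MeasureTheory.integral_biUnion_finset R (fun r _ => measurableSet_Ico)
        (fun a _ b _ hab => by
          have h1 := Ico_disj 0 uu hupos a b hab
          simpa using h1)
        (fun r _ => integrableOn_of_bound ψ _ _
          (by rw [Real.volume_Ico]; exact ENNReal.ofReal_ne_top) hψ B hB)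
    rw [hstep g hgm _ hgnorm, hstep f hfm Bf hfnorm]
    exact Finset.sum_congr rfl fun r _ => (hIr r).symm
  -- conclude via uniqueness of conditional expectation
  have hae : g =ᵐ[P] P[f | Ffil (n*N)] := by
    refine MeasureTheory.ae_eq_condExp_of_forall_setIntegral_eq hm hfi
      (fun s hs hfin => integrableOn_of_bound g s P hfin.ne hgm _ hgnorm)
      (fun s hs _ => hseteq s hs) hgsm
  filter_upwards [hae] with x hx
  rw [← hx]
  exact hgb x
end S9

/-- higher conditional moments of the coarse increments: for every `q ≥ 1`
there is `C_q > 0` with `E[|dX^i_{n+1}|^{2q} | F_{nN}] ≤ C_q θ^q` a.e., `θ = Nδ`. -/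
theorem statement9 :
    ∀ q : ℕ, 1 ≤ q → ∃ C : ℝ, 0 < C ∧
      ∀ δ : ℝ, 0 < δ → ∀ N : ℕ, 1 ≤ N → ∀ n : ℕ, n < N ^ 4 →
        (∀ᵐ x ∂P, (P[fun y => (_root_.abs (dX1 δ N n y)) ^ (2 * q)|Ffil (n * N)]) x ≤
          C * ((N : ℝ) * δ) ^ q) ∧
        (∀ᵐ x ∂P, (P[fun y => (_root_.abs (dX2 δ N n y)) ^ (2 * q)|Ffil (n * N)]) x ≤
          C * ((N : ℝ) * δ) ^ q) := by
  intro q hq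
  refine ⟨4^(q^2) * 4^q, by positivity, ?_⟩
  intro δ hδ N hN n _
  constructor
  · have h := S9.main_bound q hq δ hδ N hN n (-1)
    simpa only [dX1, dB1] using h
  · have h := S9.main_bound q hq δ hδ N hN n 1
    simpa only [dX2, dB2] using h


end
end

section
/- There exists a function c : (0,∞) → [0,∞) with c(T) → 0 as T → ∞ such that for every T > 0 and every integer N ≥ 2T (with δ = T N^{−5}, ε = 1/N): P( |X_n| ≤ 1 − ε for all 0 ≤ n ≤ N⁴ ) ≤ c(T). In other words, the probability that the discrete stopping time τ_ε exceeds T is bounded by c(T) uniformly in N. -/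
open MeasureTheory Filter
open scoped ENNReal MeasureTheory

noncomputable section

namespace S13

lemma rad_sq (k : ℕ) (x : ℝ) : rad k x ^ 2 = 1 := by
  unfold rad; split <;> norm_num

lemma rad_cases (k : ℕ) (x : ℝ) : rad k x = 1 ∨ rad k x = -1 := by
  unfold rad; split <;> simp

lemma abs_rad_le (k : ℕ) (x : ℝ) : |rad k x| ≤ 1 := by
  rcases rad_cases k x with h | h <;> rw [h] <;> norm_num

lemma measurable_rad (k : ℕ) : Measurable (rad k) := by
  unfold rad
  have h : Measurable fun x : ℝ => ⌊(2:ℝ)^(k+1) * x⌋ :=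
    Int.measurable_floor.comp (measurable_const.mul measurable_id)
  exact Measurable.ite (h (MeasurableSet.of_discrete (s := {n : ℤ | Odd n})))
    measurable_const measurable_const

lemma floor_half (x : ℝ) : ⌊x⌋ = ⌊2*x⌋ / 2 := by
  have h1 : (↑⌊2*x⌋ : ℝ) ≤ 2*x := Int.floor_le _
  have h2 : 2*x < ↑⌊2*x⌋ + 1 := Int.lt_floor_add_one _
  have hd : 2 * (⌊2*x⌋ / 2) + ⌊2*x⌋ % 2 = ⌊2*x⌋ := Int.mul_ediv_add_emod _ 2
  have hm0 : (0:ℤ) ≤ ⌊2*x⌋ % 2 := Int.emod_nonneg _ (by norm_num)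
  have hm1 : ⌊2*x⌋ % 2 < 2 := Int.emod_lt_of_pos _ (by norm_num)
  rw [Int.floor_eq_iff]
  have hdr : 2 * ((⌊2*x⌋ / 2 : ℤ) : ℝ) + ((⌊2*x⌋ % 2 : ℤ) : ℝ) = ((⌊2*x⌋ : ℤ) : ℝ) := by
    exact_mod_cast congrArg (fun z : ℤ => (z : ℝ)) hd
  constructor
  · have : ((⌊2*x⌋ % 2 : ℤ) : ℝ) ≥ 0 := by exact_mod_cast hm0
    linarith
  · have hm1' : ⌊2*x⌋ % 2 ≤ 1 := by omega
    have : ((⌊2*x⌋ % 2 : ℤ) : ℝ) ≤ 1 := by exact_mod_cast hm1'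
    linarith

def Dconst (r : ℕ) (f : ℝ → ℝ) : Prop :=
  ∀ x y : ℝ, ⌊(2:ℝ)^r * x⌋ = ⌊(2:ℝ)^r * y⌋ → f x = f y

lemma floor_det {r r' : ℕ} (h : r ≤ r') {x y : ℝ}
    (hxy : ⌊(2:ℝ)^r' * x⌋ = ⌊(2:ℝ)^r' * y⌋) : ⌊(2:ℝ)^r * x⌋ = ⌊(2:ℝ)^r * y⌋ := by
  induction r' with
  | zero => simpa [Nat.le_zero.mp h] using hxy
  | succ n ih =>
    rcases Nat.lt_or_ge r (n+1) with hlt | hge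
    · apply ih (Nat.lt_succ_iff.mp hlt)
      have ex : ∀ z : ℝ, (2:ℝ)^(n+1) * z = 2 * ((2:ℝ)^n * z) := by intro z; ring
      rw [ex x, ex y] at hxy
      rw [floor_half ((2:ℝ)^n * x), floor_half ((2:ℝ)^n * y), hxy]
    · have : r = n + 1 := le_antisymm h hge
      subst this; exact hxy

lemma Dconst_mono {r r' : ℕ} (h : r ≤ r') {f : ℝ → ℝ} (hf : Dconst r f) : Dconst r' f :=
  fun x y hxy => hf x y (floor_det h hxy)

lemma Dconst_rad (j : ℕ) : Dconst (j+1) (rad j) := by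
  intro x y h; unfold rad; rw [h]

lemma floor_piece (r m : ℕ) {x : ℝ}
    (hx : x ∈ Set.Ico ((m:ℝ)/2^(r+1)) (((m:ℝ)+1)/2^(r+1))) :
    ⌊(2:ℝ)^(r+1) * x⌋ = (m : ℤ) := by
  obtain ⟨h1, h2⟩ := hx
  have hp : (0:ℝ) < 2^(r+1) := by positivity
  rw [Int.floor_eq_iff]
  rw [div_le_iff₀ hp] at h1
  rw [lt_div_iff₀ hp] at h2
  constructor
  · push_cast; linarith
  · push_cast; linarith

lemma sum_range_two_mul (n : ℕ) (f : ℕ → ℝ) :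
    ∑ m ∈ Finset.range (2*n), f m = ∑ i ∈ Finset.range n, (f (2*i) + f (2*i+1)) := by
  induction n with
  | zero => simp
  | succ k ih =>
    rw [Finset.sum_range_succ, ← ih, Nat.mul_succ, Finset.sum_range_succ,
      Finset.sum_range_succ]
    ring

lemma sum_pieces (r : ℕ) (F : ℝ → ℝ)
    (hF : ∀ (m : ℕ) (x : ℝ), x ∈ Set.Ico ((m:ℝ)/2^(r+1)) (((m:ℝ)+1)/2^(r+1)) →
      F x = F ((m:ℝ)/2^(r+1))) (n : ℕ) :
    IntegrableOn F (Set.Ico 0 ((n:ℝ)/2^(r+1))) volume ∧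
      ∫ x in Set.Ico (0:ℝ) ((n:ℝ)/2^(r+1)), F x =
        (∑ m ∈ Finset.range n, F ((m:ℝ)/2^(r+1))) / 2^(r+1) := by
  have hp : (0:ℝ) < 2^(r+1) := by positivity
  induction n with
  | zero => simp
  | succ k ih =>
    have hk : (0:ℝ) ≤ (k:ℝ)/2^(r+1) := by positivity
    have hkk : ((k:ℝ))/2^(r+1) ≤ ((k:ℝ)+1)/2^(r+1) := by
      gcongr; linarith
    have hcast : ((k+1:ℕ):ℝ)/2^(r+1) = ((k:ℝ)+1)/2^(r+1) := by push_cast; ring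
    have hsplit : Set.Ico (0:ℝ) (((k:ℝ)+1)/2^(r+1)) =
        Set.Ico (0:ℝ) ((k:ℝ)/2^(r+1)) ∪ Set.Ico ((k:ℝ)/2^(r+1)) (((k:ℝ)+1)/2^(r+1)) :=
      (Set.Ico_union_Ico_eq_Ico hk hkk).symm
    have hpieceEq : Set.EqOn F (fun _ => F ((k:ℝ)/2^(r+1)))
        (Set.Ico ((k:ℝ)/2^(r+1)) (((k:ℝ)+1)/2^(r+1))) := fun x hx => hF k x hx
    have hmeasp : MeasurableSet (Set.Ico ((k:ℝ)/2^(r+1)) (((k:ℝ)+1)/2^(r+1))) :=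
      measurableSet_Ico
    have hvolp : volume (Set.Ico ((k:ℝ)/2^(r+1)) (((k:ℝ)+1)/2^(r+1))) =
        ENNReal.ofReal (1/2^(r+1)) := by
      rw [Real.volume_Ico]; congr 1; ring
    have hintp : IntegrableOn F (Set.Ico ((k:ℝ)/2^(r+1)) (((k:ℝ)+1)/2^(r+1))) volume := by
      apply (integrableOn_const (lt_top_iff_ne_top.mp ?_)).congr_fun hpieceEq.symm hmeasp
      rw [hvolp]; exact ENNReal.ofReal_lt_top
    have hintgp : ∫ x in Set.Ico ((k:ℝ)/2^(r+1)) (((k:ℝ)+1)/2^(r+1)), F x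
        = F ((k:ℝ)/2^(r+1)) / 2^(r+1) := by
      rw [setIntegral_congr_fun hmeasp hpieceEq, setIntegral_const, measureReal_def, hvolp,
        ENNReal.toReal_ofReal (by positivity)]
      simp [smul_eq_mul]; ring
    have hdisj : Disjoint (Set.Ico (0:ℝ) ((k:ℝ)/2^(r+1)))
        (Set.Ico ((k:ℝ)/2^(r+1)) (((k:ℝ)+1)/2^(r+1))) := Set.Ico_disjoint_Ico_same.mono (Set.Ico_subset_Ico_right le_rfl) le_rfl
    constructor
    · rw [hcast, hsplit]; exact ih.1.union hintp
    · rw [hcast, hsplit, setIntegral_union hdisj hmeasp ih.1 hintp, ih.2, hintgp,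
        Finset.sum_range_succ]
      ring

lemma rad_eval (r m : ℕ) : rad r ((m:ℝ)/2^(r+1)) = if Odd m then 1 else -1 := by
  unfold rad
  have h : (2:ℝ)^(r+1) * ((m:ℝ)/2^(r+1)) = (m:ℝ) := by
    field_simp
  rw [h, Int.floor_natCast]
  simp [Int.odd_coe_nat]

lemma integral_mul_rad (r : ℕ) {G : ℝ → ℝ} (hG : Dconst r G) :
    (IntegrableOn (fun x => G x * rad r x) (Set.Ico (0:ℝ) 1) volume) ∧
    ∫ x in Set.Ico (0:ℝ) 1, G x * rad r x = 0 := by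
  set F : ℝ → ℝ := fun x => G x * rad r x with hFdef
  have hF : ∀ (m : ℕ) (x : ℝ), x ∈ Set.Ico ((m:ℝ)/2^(r+1)) (((m:ℝ)+1)/2^(r+1)) →
      F x = F ((m:ℝ)/2^(r+1)) := by
    intro m x hx
    have hfl : ⌊(2:ℝ)^(r+1) * x⌋ = (m:ℤ) := floor_piece r m hx
    have hfl' : ⌊(2:ℝ)^(r+1) * ((m:ℝ)/2^(r+1))⌋ = (m:ℤ) := by
      apply floor_piece r m
      refine ⟨le_refl _, ?_⟩
      have hp : (0:ℝ) < 2^(r+1) := by positivity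
      rw [div_lt_div_iff₀ hp hp]
      nlinarith
    have heq : ⌊(2:ℝ)^(r+1) * x⌋ = ⌊(2:ℝ)^(r+1) * ((m:ℝ)/2^(r+1))⌋ := by rw [hfl, hfl']
    have hGx : G x = G ((m:ℝ)/2^(r+1)) := hG x _ (floor_det (Nat.le_succ r) heq)
    have hrx : rad r x = rad r ((m:ℝ)/2^(r+1)) := by unfold rad; rw [heq]
    show G x * rad r x = G ((m:ℝ)/2^(r+1)) * rad r ((m:ℝ)/2^(r+1))
    rw [hGx, hrx]
  obtain ⟨hint, hval⟩ := sum_pieces r F hF (2^(r+1))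
  have h1 : ((2^(r+1) : ℕ) : ℝ)/2^(r+1) = 1 := by
    rw [div_eq_one_iff_eq (by positivity)]; push_cast; ring
  rw [h1] at hint hval
  refine ⟨hint, ?_⟩
  rw [hval]
  have h2 : (2:ℕ)^(r+1) = 2 * 2^r := by ring
  rw [h2, sum_range_two_mul]
  rw [Finset.sum_eq_zero, zero_div]
  intro i _
  have ha : ⌊(2:ℝ)^r * (((2*i:ℕ):ℝ)/2^(r+1))⌋ = (i:ℤ) := by
    have h : (2:ℝ)^r * (((2*i:ℕ):ℝ)/2^(r+1)) = (i:ℝ) := by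
      push_cast; field_simp; ring
    rw [h, Int.floor_natCast]
  have hb : ⌊(2:ℝ)^r * (((2*i+1:ℕ):ℝ)/2^(r+1))⌋ = (i:ℤ) := by
    have h : (2:ℝ)^r * (((2*i+1:ℕ):ℝ)/2^(r+1)) = (i:ℝ) + 1/2 := by
      push_cast; field_simp; ring
    rw [h, Int.floor_eq_iff]
    constructor
    · push_cast; linarith
    · push_cast; linarith
  have hGeq : G (((2*i:ℕ):ℝ)/2^(r+1)) = G (((2*i+1:ℕ):ℝ)/2^(r+1)) :=
    hG _ _ (ha.trans hb.symm)
  have hra : rad r (((2*i:ℕ):ℝ)/2^(r+1)) = -1 := by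
    rw [rad_eval]; simp [Nat.odd_iff, Nat.mul_mod_right]
  have hrb : rad r (((2*i+1:ℕ):ℝ)/2^(r+1)) = 1 := by
    rw [rad_eval]
    have : Odd (2*i+1) := ⟨i, by ring⟩
    simp [this]
  show G _ * rad r _ + G _ * rad r _ = 0
  rw [hGeq, hra, hrb]
  ring

/-! ### walk basics -/

def q (δ : ℝ) (k : ℕ) (x : ℝ) : ℝ := B1 δ k x ^ 2 + B2 δ k x ^ 2

def Ak (δ : ℝ) (k : ℕ) : Set ℝ := Set.Ico (0:ℝ) 1 ∩ {x | ∀ j ≤ k, q δ j x ≤ 1}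

variable {δ : ℝ}

lemma measurable_dB1 (l : ℕ) : Measurable (dB1 δ l) := by
  unfold dB1
  apply Measurable.mul _ measurable_const
  apply Measurable.mul _ (measurable_rad l)
  exact Measurable.ite ((measurable_rad (l-1)) (measurableSet_singleton (-1)))
    measurable_const measurable_const

lemma measurable_dB2 (l : ℕ) : Measurable (dB2 δ l) := by
  unfold dB2
  apply Measurable.mul _ measurable_const
  apply Measurable.mul _ (measurable_rad l)
  exact Measurable.ite ((measurable_rad (l-1)) (measurableSet_singleton 1))
    measurable_const measurable_const

lemma measurable_B1 (k : ℕ) : Measurable (B1 δ k) := by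
  unfold B1; exact Finset.measurable_sum _ fun l _ => measurable_dB1 l

lemma measurable_B2 (k : ℕ) : Measurable (B2 δ k) := by
  unfold B2; exact Finset.measurable_sum _ fun l _ => measurable_dB2 l

lemma measurable_q (k : ℕ) : Measurable (q δ k) := by
  unfold q; exact ((measurable_B1 k).pow_const 2).add ((measurable_B2 k).pow_const 2)

lemma measurableSet_qset (k : ℕ) : MeasurableSet {x : ℝ | ∀ j ≤ k, q δ j x ≤ 1} := by
  have : {x : ℝ | ∀ j ≤ k, q δ j x ≤ 1} = ⋂ j, ⋂ _ : j ≤ k, {x | q δ j x ≤ 1} := by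
    ext x; simp
  rw [this]
  exact MeasurableSet.iInter fun j => MeasurableSet.iInter fun _ =>
    measurableSet_le (measurable_q j) measurable_const

lemma measurableSet_Ak (k : ℕ) : MeasurableSet (Ak δ k) :=
  measurableSet_Ico.inter (measurableSet_qset k)

lemma Ak_subset (k : ℕ) : Ak δ k ⊆ Set.Ico (0:ℝ) 1 := Set.inter_subset_left

lemma Ak_antitone {k k' : ℕ} (h : k ≤ k') : Ak δ k' ⊆ Ak δ k := by
  intro x hx; exact ⟨hx.1, fun j hj => hx.2 j (hj.trans h)⟩

lemma vol_Ak_lt_top (k : ℕ) : volume (Ak δ k) < ⊤ :=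
  lt_of_le_of_lt (measure_mono (Ak_subset k)) (by rw [Real.volume_Ico]; norm_num)

lemma abs_dB1_le (hδ : 0 ≤ δ) (l : ℕ) (x : ℝ) : |dB1 δ l x| ≤ Real.sqrt (2*δ) := by
  unfold dB1
  rw [abs_mul, abs_mul, abs_of_nonneg (Real.sqrt_nonneg _)]
  have h1 : |if rad (l-1) x = -1 then (1:ℝ) else 0| ≤ 1 := by split <;> norm_num
  have h2 : |if rad (l-1) x = -1 then (1:ℝ) else 0| * |rad l x| ≤ 1 :=
    mul_le_one₀ h1 (abs_nonneg _) (abs_rad_le l x)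
  have h3 := mul_le_mul_of_nonneg_right h2 (Real.sqrt_nonneg (2*δ))
  linarith

lemma abs_dB2_le (hδ : 0 ≤ δ) (l : ℕ) (x : ℝ) : |dB2 δ l x| ≤ Real.sqrt (2*δ) := by
  unfold dB2
  rw [abs_mul, abs_mul, abs_of_nonneg (Real.sqrt_nonneg _)]
  have h1 : |if rad (l-1) x = 1 then (1:ℝ) else 0| ≤ 1 := by split <;> norm_num
  have h2 : |if rad (l-1) x = 1 then (1:ℝ) else 0| * |rad l x| ≤ 1 :=
    mul_le_one₀ h1 (abs_nonneg _) (abs_rad_le l x)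
  have h3 := mul_le_mul_of_nonneg_right h2 (Real.sqrt_nonneg (2*δ))
  linarith

lemma abs_B1_le (hδ : 0 ≤ δ) (k : ℕ) (x : ℝ) : |B1 δ k x| ≤ k * Real.sqrt (2*δ) := by
  unfold B1
  calc |∑ l ∈ Finset.Icc 1 k, dB1 δ l x| ≤ ∑ l ∈ Finset.Icc 1 k, |dB1 δ l x| :=
        Finset.abs_sum_le_sum_abs _ _
    _ ≤ ∑ l ∈ Finset.Icc 1 k, Real.sqrt (2*δ) :=
        Finset.sum_le_sum fun l _ => abs_dB1_le hδ l x
    _ ≤ k * Real.sqrt (2*δ) := by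
        rw [Finset.sum_const, Nat.card_Icc, Nat.add_sub_cancel, nsmul_eq_mul]

lemma abs_B2_le (hδ : 0 ≤ δ) (k : ℕ) (x : ℝ) : |B2 δ k x| ≤ k * Real.sqrt (2*δ) := by
  unfold B2
  calc |∑ l ∈ Finset.Icc 1 k, dB2 δ l x| ≤ ∑ l ∈ Finset.Icc 1 k, |dB2 δ l x| :=
        Finset.abs_sum_le_sum_abs _ _
    _ ≤ ∑ l ∈ Finset.Icc 1 k, Real.sqrt (2*δ) :=
        Finset.sum_le_sum fun l _ => abs_dB2_le hδ l x
    _ ≤ k * Real.sqrt (2*δ) := by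
        rw [Finset.sum_const, Nat.card_Icc, Nat.add_sub_cancel, nsmul_eq_mul]

lemma integrableOn_of_bounded {f : ℝ → ℝ} {s : Set ℝ} (hs : volume s < ⊤)
    (hf : Measurable f) {C : ℝ} (hC : ∀ x, |f x| ≤ C) : IntegrableOn f s volume := by
  apply Integrable.mono' (g := fun _ => C) (integrableOn_const hs.ne)
    hf.aestronglyMeasurable
  exact ae_of_all _ fun x => hC x

lemma dsq (hδ : 0 ≤ δ) (l : ℕ) (x : ℝ) : dB1 δ l x ^ 2 + dB2 δ l x ^ 2 = 2*δ := by
  have hs : Real.sqrt (2*δ) ^ 2 = 2*δ := Real.sq_sqrt (by linarith)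
  have hr : rad l x ^ 2 = 1 := rad_sq l x
  rcases rad_cases (l-1) x with h | h
  · have e1 : dB1 δ l x = 0 := by unfold dB1; rw [h]; norm_num
    have e2 : dB2 δ l x = rad l x * Real.sqrt (2*δ) := by unfold dB2; rw [h]; norm_num
    rw [e1, e2]; nlinarith
  · have e1 : dB1 δ l x = rad l x * Real.sqrt (2*δ) := by unfold dB1; rw [h]; norm_num
    have e2 : dB2 δ l x = 0 := by unfold dB2; rw [h]; norm_num
    rw [e1, e2]; nlinarith

lemma B1_succ (k : ℕ) (x : ℝ) : B1 δ (k+1) x = B1 δ k x + dB1 δ (k+1) x := by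
  unfold B1; rw [Finset.sum_Icc_succ_top (Nat.one_le_iff_ne_zero.mpr (Nat.succ_ne_zero k))]

lemma B2_succ (k : ℕ) (x : ℝ) : B2 δ (k+1) x = B2 δ k x + dB2 δ (k+1) x := by
  unfold B2; rw [Finset.sum_Icc_succ_top (Nat.one_le_iff_ne_zero.mpr (Nat.succ_ne_zero k))]

lemma q_succ (hδ : 0 ≤ δ) (k : ℕ) (x : ℝ) :
    q δ (k+1) x = q δ k x
      + 2*(B1 δ k x * dB1 δ (k+1) x + B2 δ k x * dB2 δ (k+1) x) + 2*δ := by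
  have hd := dsq hδ (k+1) x
  unfold q
  rw [B1_succ, B2_succ]
  linear_combination hd

/-! ### Dconst properties of the walk -/

lemma rad_det {k j : ℕ} (hj : j ≤ k) {x y : ℝ}
    (h : ⌊(2:ℝ)^(k+1) * x⌋ = ⌊(2:ℝ)^(k+1) * y⌋) : rad j x = rad j y :=
  Dconst_mono (Nat.succ_le_succ hj) (Dconst_rad j) x y h

lemma dB1_det {k l : ℕ} (hl : l ≤ k) {x y : ℝ}
    (h : ⌊(2:ℝ)^(k+1) * x⌋ = ⌊(2:ℝ)^(k+1) * y⌋) : dB1 δ l x = dB1 δ l y := by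
  unfold dB1
  rw [rad_det ((Nat.sub_le l 1).trans hl) h, rad_det hl h]

lemma dB2_det {k l : ℕ} (hl : l ≤ k) {x y : ℝ}
    (h : ⌊(2:ℝ)^(k+1) * x⌋ = ⌊(2:ℝ)^(k+1) * y⌋) : dB2 δ l x = dB2 δ l y := by
  unfold dB2
  rw [rad_det ((Nat.sub_le l 1).trans hl) h, rad_det hl h]

lemma B1_det {k j : ℕ} (hj : j ≤ k) {x y : ℝ}
    (h : ⌊(2:ℝ)^(k+1) * x⌋ = ⌊(2:ℝ)^(k+1) * y⌋) : B1 δ j x = B1 δ j y := by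
  unfold B1
  exact Finset.sum_congr rfl fun l hl =>
    dB1_det ((Finset.mem_Icc.mp hl).2.trans hj) h

lemma B2_det {k j : ℕ} (hj : j ≤ k) {x y : ℝ}
    (h : ⌊(2:ℝ)^(k+1) * x⌋ = ⌊(2:ℝ)^(k+1) * y⌋) : B2 δ j x = B2 δ j y := by
  unfold B2
  exact Finset.sum_congr rfl fun l hl =>
    dB2_det ((Finset.mem_Icc.mp hl).2.trans hj) h

lemma q_det {k j : ℕ} (hj : j ≤ k) {x y : ℝ}
    (h : ⌊(2:ℝ)^(k+1) * x⌋ = ⌊(2:ℝ)^(k+1) * y⌋) : q δ j x = q δ j y := by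
  unfold q
  rw [B1_det hj h, B2_det hj h]

lemma mem_Ico_det {r : ℕ} {x y : ℝ}
    (h : ⌊(2:ℝ)^r * x⌋ = ⌊(2:ℝ)^r * y⌋) (hx : x ∈ Set.Ico (0:ℝ) 1) :
    y ∈ Set.Ico (0:ℝ) 1 := by
  have hp : (0:ℝ) < 2^r := by positivity
  have hfx0 : (0:ℤ) ≤ ⌊(2:ℝ)^r * x⌋ := Int.floor_nonneg.mpr (by nlinarith [hx.1])
  have hfx1 : ⌊(2:ℝ)^r * x⌋ < (2^r : ℤ) := by
    rw [Int.floor_lt]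
    push_cast
    nlinarith [hx.2]
  have hy0 : (0:ℝ) ≤ 2^r * y := by
    have := Int.floor_le ((2:ℝ)^r * y)
    rw [← h] at this
    have : (0:ℝ) ≤ (⌊(2:ℝ)^r * x⌋ : ℝ) := by exact_mod_cast hfx0
    linarith [Int.floor_le ((2:ℝ)^r * y), show ((⌊(2:ℝ)^r * y⌋:ℤ):ℝ) = ((⌊(2:ℝ)^r * x⌋:ℤ):ℝ) by exact_mod_cast h.symm]
  have hy1 : 2^r * y < 2^r := by
    have h2 := Int.lt_floor_add_one ((2:ℝ)^r * y)
    have hcast : ((⌊(2:ℝ)^r * y⌋:ℤ):ℝ) = ((⌊(2:ℝ)^r * x⌋:ℤ):ℝ) := by exact_mod_cast h.symm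
    have h3 : (⌊(2:ℝ)^r * x⌋ : ℝ) + 1 ≤ (2:ℝ)^r := by
      have : ⌊(2:ℝ)^r * x⌋ + 1 ≤ (2^r : ℤ) := hfx1
      exact_mod_cast this
    linarith
  constructor
  · nlinarith
  · nlinarith

lemma mem_Ak_det (k : ℕ) {x y : ℝ}
    (h : ⌊(2:ℝ)^(k+1) * x⌋ = ⌊(2:ℝ)^(k+1) * y⌋) (hx : x ∈ Ak δ k) : y ∈ Ak δ k := by
  refine ⟨mem_Ico_det h hx.1, fun j hj => ?_⟩
  rw [← q_det hj h]
  exact hx.2 j hj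

/-! ### the martingale cross term vanishes -/

lemma cross_zero (k : ℕ) :
    ∫ x in Ak δ k, (B1 δ k x * dB1 δ (k+1) x + B2 δ k x * dB2 δ (k+1) x) = 0 := by
  set g : ℝ → ℝ := fun x =>
    (B1 δ k x * (if rad k x = -1 then 1 else 0)
      + B2 δ k x * (if rad k x = 1 then 1 else 0)) * Real.sqrt (2*δ) with hg
  set G : ℝ → ℝ := (Ak δ k).indicator g with hG
  have hDG : Dconst (k+1) G := by
    intro x y h
    have hgeq : g x = g y := by
      rw [hg]
      simp only
      rw [B1_det le_rfl h, B2_det le_rfl h, rad_det le_rfl h]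
    by_cases hx : x ∈ Ak δ k
    · rw [hG, Set.indicator_of_mem hx, Set.indicator_of_mem (mem_Ak_det k h hx), hgeq]
    · have hy : y ∉ Ak δ k := fun hy => hx (mem_Ak_det k h.symm hy)
      rw [hG, Set.indicator_of_notMem hx, Set.indicator_of_notMem hy]
  have hzero := (integral_mul_rad (k+1) hDG).2
  have hpt : ∀ x : ℝ, G x * rad (k+1) x =
      (Ak δ k).indicator
        (fun x => B1 δ k x * dB1 δ (k+1) x + B2 δ k x * dB2 δ (k+1) x) x := by
    intro x
    by_cases hx : x ∈ Ak δ k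
    · rw [hG, Set.indicator_of_mem hx, Set.indicator_of_mem hx, hg]
      show (B1 δ k x * _ + B2 δ k x * _) * Real.sqrt (2*δ) * rad (k+1) x = _
      unfold dB1 dB2
      have : (k+1) - 1 = k := rfl
      rw [this]
      ring
    · rw [hG, Set.indicator_of_notMem hx, Set.indicator_of_notMem hx, zero_mul]
  have : ∫ x in Set.Ico (0:ℝ) 1, G x * rad (k+1) x =
      ∫ x in Ak δ k, (B1 δ k x * dB1 δ (k+1) x + B2 δ k x * dB2 δ (k+1) x) := by
    rw [show (fun x => G x * rad (k+1) x) = (Ak δ k).indicator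
        (fun x => B1 δ k x * dB1 δ (k+1) x + B2 δ k x * dB2 δ (k+1) x) from funext hpt]
    rw [setIntegral_indicator (measurableSet_Ak k)]
    congr 1
    rw [Set.inter_eq_right.mpr (Ak_subset k)]
  rw [← this, hzero]

/-! ### second moment recursion -/

lemma abs_q_le (hδ : 0 ≤ δ) (j : ℕ) (x : ℝ) :
    |q δ j x| ≤ 2 * (j * Real.sqrt (2*δ))^2 := by
  have h1 := abs_B1_le hδ j x
  have h2 := abs_B2_le hδ j x
  have h3 : (0:ℝ) ≤ q δ j x := by unfold q; positivity
  rw [abs_of_nonneg h3]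
  unfold q
  nlinarith [abs_nonneg (B1 δ j x), abs_nonneg (B2 δ j x), sq_abs (B1 δ j x), sq_abs (B2 δ j x)]

lemma abs_cross_le (hδ : 0 ≤ δ) (k : ℕ) (x : ℝ) :
    |B1 δ k x * dB1 δ (k+1) x + B2 δ k x * dB2 δ (k+1) x|
      ≤ 2 * (k * Real.sqrt (2*δ)) * Real.sqrt (2*δ) := by
  have h1 := abs_B1_le hδ k x
  have h2 := abs_B2_le hδ k x
  have h3 := abs_dB1_le hδ (k+1) x
  have h4 := abs_dB2_le hδ (k+1) x
  calc |B1 δ k x * dB1 δ (k+1) x + B2 δ k x * dB2 δ (k+1) x|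
      ≤ |B1 δ k x| * |dB1 δ (k+1) x| + |B2 δ k x| * |dB2 δ (k+1) x| := by
        rw [← abs_mul, ← abs_mul]; exact abs_add_le _ _
    _ ≤ 2 * (k * Real.sqrt (2*δ)) * Real.sqrt (2*δ) := by
        nlinarith [abs_nonneg (B1 δ k x), abs_nonneg (B2 δ k x),
          abs_nonneg (dB1 δ (k+1) x), abs_nonneg (dB2 δ (k+1) x), Real.sqrt_nonneg (2*δ)]

lemma integrableOn_q (hδ : 0 ≤ δ) (j : ℕ) {s : Set ℝ} (hs : volume s < ⊤) :
    IntegrableOn (q δ j) s volume :=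
  integrableOn_of_bounded hs (measurable_q j) (abs_q_le hδ j)

lemma integrableOn_cross (hδ : 0 ≤ δ) (k : ℕ) {s : Set ℝ} (hs : volume s < ⊤) :
    IntegrableOn (fun x => B1 δ k x * dB1 δ (k+1) x + B2 δ k x * dB2 δ (k+1) x) s volume :=
  integrableOn_of_bounded hs
    (((measurable_B1 k).mul (measurable_dB1 (k+1))).add
      ((measurable_B2 k).mul (measurable_dB2 (k+1))))
    (abs_cross_le hδ k)

lemma step_eq (hδ : 0 ≤ δ) (k : ℕ) :
    ∫ x in Ak δ k, q δ (k+1) x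
      = (∫ x in Ak δ k, q δ k x) + 2*δ*(volume (Ak δ k)).toReal := by
  have hEq : Set.EqOn (q δ (k+1))
      (fun x => q δ k x + (2*(B1 δ k x * dB1 δ (k+1) x + B2 δ k x * dB2 δ (k+1) x) + 2*δ))
      (Ak δ k) := fun x _ => by rw [q_succ hδ k x]; ring
  rw [setIntegral_congr_fun (measurableSet_Ak k) hEq]
  have hvol := vol_Ak_lt_top (δ := δ) k
  have hint1 : IntegrableOn (q δ k) (Ak δ k) volume := integrableOn_q hδ k hvol
  have hint2 : IntegrableOn
      (fun x => 2*(B1 δ k x * dB1 δ (k+1) x + B2 δ k x * dB2 δ (k+1) x)) (Ak δ k) volume :=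
    (integrableOn_cross hδ k hvol).const_mul 2
  have hint3 : IntegrableOn (fun _ : ℝ => 2*δ) (Ak δ k) volume :=
    integrableOn_const hvol.ne
  have hadd := integral_add (μ := volume.restrict (Ak δ k)) hint1 (hint2.add hint3)
  simp only [Pi.add_apply] at hadd
  rw [hadd, integral_add hint2 hint3, integral_const_mul, cross_zero k, setIntegral_const, measureReal_def]
  simp [smul_eq_mul]
  ring

lemma q_le_four (hδ0 : 0 ≤ δ) (hδ2 : δ ≤ 1/2) {k : ℕ} {x : ℝ} (hx : x ∈ Ak δ k) :
    q δ (k+1) x ≤ 4 := by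
  have hd := dsq hδ0 (k+1) x
  have hq := hx.2 k le_rfl
  unfold q at *
  rw [B1_succ, B2_succ]
  nlinarith [sq_nonneg (B1 δ k x - dB1 δ (k+1) x), sq_nonneg (B2 δ k x - dB2 δ (k+1) x)]

lemma vol_diff (k : ℕ) :
    (volume (Ak δ k \ Ak δ (k+1))).toReal
      = (volume (Ak δ k)).toReal - (volume (Ak δ (k+1))).toReal := by
  rw [measure_diff (Ak_antitone (Nat.le_succ k)) (measurableSet_Ak (k+1)).nullMeasurableSet
    (vol_Ak_lt_top (k+1)).ne]
  rw [ENNReal.toReal_sub_of_le (measure_mono (Ak_antitone (Nat.le_succ k)))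
    (vol_Ak_lt_top k).ne]

lemma split_bound (hδ0 : 0 ≤ δ) (hδ2 : δ ≤ 1/2) (k : ℕ) :
    ∫ x in Ak δ k, q δ (k+1) x
      ≤ (∫ x in Ak δ (k+1), q δ (k+1) x)
        + 4*((volume (Ak δ k)).toReal - (volume (Ak δ (k+1))).toReal) := by
  have hsub : Ak δ (k+1) ⊆ Ak δ k := Ak_antitone (Nat.le_succ k)
  have hun : Ak δ (k+1) ∪ (Ak δ k \ Ak δ (k+1)) = Ak δ k := Set.union_diff_cancel hsub
  have hmeasd : MeasurableSet (Ak δ k \ Ak δ (k+1)) :=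
    (measurableSet_Ak k).diff (measurableSet_Ak (k+1))
  have hvold : volume (Ak δ k \ Ak δ (k+1)) < ⊤ :=
    lt_of_le_of_lt (measure_mono Set.diff_subset) (vol_Ak_lt_top k)
  have hi1 : IntegrableOn (q δ (k+1)) (Ak δ (k+1)) volume :=
    integrableOn_q hδ0 (k+1) (vol_Ak_lt_top (k+1))
  have hi2 : IntegrableOn (q δ (k+1)) (Ak δ k \ Ak δ (k+1)) volume :=
    integrableOn_q hδ0 (k+1) hvold
  have key : ∫ x in Ak δ k, q δ (k+1) x
      = (∫ x in Ak δ (k+1), q δ (k+1) x)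
        + ∫ x in Ak δ k \ Ak δ (k+1), q δ (k+1) x := by
    conv_lhs => rw [← hun]
    exact setIntegral_union Set.disjoint_sdiff_right hmeasd hi1 hi2
  have hbound : ∫ x in Ak δ k \ Ak δ (k+1), q δ (k+1) x
      ≤ 4*((volume (Ak δ k)).toReal - (volume (Ak δ (k+1))).toReal) := by
    calc ∫ x in Ak δ k \ Ak δ (k+1), q δ (k+1) x
        ≤ ∫ _ in Ak δ k \ Ak δ (k+1), (4:ℝ) := by
          apply setIntegral_mono_on hi2 (integrableOn_const hvold.ne) hmeasd
          intro x hx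
          exact q_le_four hδ0 hδ2 hx.1
      _ = 4*((volume (Ak δ k)).toReal - (volume (Ak δ (k+1))).toReal) := by
          rw [setIntegral_const, measureReal_def, vol_diff, smul_eq_mul, mul_comm]
  linarith [key, hbound]

lemma q_zero (x : ℝ) : q δ 0 x = 0 := by
  unfold q B1 B2
  rw [Finset.Icc_eq_empty (by norm_num)]
  simp

lemma telescope (hδ0 : 0 ≤ δ) (hδ2 : δ ≤ 1/2) (K : ℕ) :
    ∀ k ≤ K, 2*δ*k*(volume (Ak δ K)).toReal
      - 4*((volume (Ak δ 0)).toReal - (volume (Ak δ k)).toReal)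
      ≤ ∫ x in Ak δ k, q δ k x := by
  intro k
  induction k with
  | zero =>
    intro _
    rw [setIntegral_congr_fun (measurableSet_Ak 0) (fun x _ => q_zero x)]
    simp
  | succ k ih =>
    intro hk1
    have hk : k ≤ K := Nat.le_of_succ_le hk1
    have ihk := ih hk
    have h1 := split_bound hδ0 hδ2 (δ := δ) k
    have h2 := step_eq hδ0 (δ := δ) k
    have hmono : (volume (Ak δ K)).toReal ≤ (volume (Ak δ k)).toReal :=
      ENNReal.toReal_mono (vol_Ak_lt_top k).ne (measure_mono (Ak_antitone hk))
    have hδk : 2*δ*(volume (Ak δ K)).toReal ≤ 2*δ*(volume (Ak δ k)).toReal := by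
      nlinarith
    push_cast
    nlinarith

lemma main_bound (hδ0 : 0 ≤ δ) (hδ2 : δ ≤ 1/2) (K : ℕ) :
    2*δ*K*(volume (Ak δ K)).toReal ≤ 4 := by
  have ht := telescope hδ0 hδ2 K K le_rfl
  have hSK : ∫ x in Ak δ K, q δ K x ≤ (volume (Ak δ K)).toReal := by
    calc ∫ x in Ak δ K, q δ K x ≤ ∫ _ in Ak δ K, (1:ℝ) := by
          apply setIntegral_mono_on (integrableOn_q hδ0 K (vol_Ak_lt_top K))
            (integrableOn_const (vol_Ak_lt_top K).ne) (measurableSet_Ak K)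
          intro x hx
          exact hx.2 K le_rfl
      _ = (volume (Ak δ K)).toReal := by rw [setIntegral_const, measureReal_def, smul_eq_mul, mul_one]
  have ha0 : (volume (Ak δ 0)).toReal ≤ 1 := by
    have h1 : volume (Ak δ 0) ≤ volume (Set.Ico (0:ℝ) 1) := measure_mono (Ak_subset 0)
    have h2 : volume (Set.Ico (0:ℝ) 1) = 1 := by rw [Real.volume_Ico]; norm_num
    rw [h2] at h1
    calc (volume (Ak δ 0)).toReal ≤ (1:ℝ≥0∞).toReal := ENNReal.toReal_mono (by norm_num) h1
      _ = 1 := by norm_num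
  have haK : 0 ≤ (volume (Ak δ K)).toReal := ENNReal.toReal_nonneg
  linarith

/-! ### path regularity: fine-scale control from coarse-scale control -/

lemma Bnorm_nonneg (k : ℕ) (x : ℝ) : 0 ≤ Bnorm δ k x := Real.sqrt_nonneg _

lemma Bnorm_sq (k : ℕ) (x : ℝ) : Bnorm δ k x ^ 2 = q δ k x := by
  unfold Bnorm q
  exact Real.sq_sqrt (by positivity)

lemma Bnorm_succ_le (hδ : 0 ≤ δ) (k : ℕ) (x : ℝ) :
    Bnorm δ (k+1) x ≤ Bnorm δ k x + Real.sqrt (2*δ) := by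
  set u := Bnorm δ k x with hu
  set v := Real.sqrt (2*δ) with hv
  have hu0 : 0 ≤ u := Real.sqrt_nonneg _
  have hv0 : 0 ≤ v := Real.sqrt_nonneg _
  have hu2 : u^2 = B1 δ k x ^2 + B2 δ k x ^2 := Bnorm_sq k x
  have hv2 : v^2 = dB1 δ (k+1) x ^2 + dB2 δ (k+1) x ^2 := by
    rw [hv, Real.sq_sqrt (by linarith), dsq hδ]
  have hcs : B1 δ k x * dB1 δ (k+1) x + B2 δ k x * dB2 δ (k+1) x ≤ u*v := by
    nlinarith [sq_nonneg (B1 δ k x * dB2 δ (k+1) x - B2 δ k x * dB1 δ (k+1) x),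
      mul_nonneg hu0 hv0, sq_nonneg (u*v - (B1 δ k x * dB1 δ (k+1) x + B2 δ k x * dB2 δ (k+1) x)),
      sq_nonneg (u*v + (B1 δ k x * dB1 δ (k+1) x + B2 δ k x * dB2 δ (k+1) x))]
  have hle : B1 δ (k+1) x ^2 + B2 δ (k+1) x ^2 ≤ (u+v)^2 := by
    rw [B1_succ, B2_succ]
    nlinarith
  calc Bnorm δ (k+1) x = Real.sqrt (B1 δ (k+1) x ^2 + B2 δ (k+1) x ^2) := rfl
    _ ≤ Real.sqrt ((u+v)^2) := Real.sqrt_le_sqrt hle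
    _ = u + v := by rw [Real.sqrt_sq (by linarith)]

lemma Bnorm_le_add (hδ : 0 ≤ δ) (m r : ℕ) (x : ℝ) :
    Bnorm δ (m+r) x ≤ Bnorm δ m x + r * Real.sqrt (2*δ) := by
  induction r with
  | zero => simp
  | succ n ih =>
    have h := Bnorm_succ_le hδ (m+n) x
    rw [show m + (n+1) = (m+n)+1 from rfl]
    push_cast
    push_cast at ih
    nlinarith [Real.sqrt_nonneg (2*δ)]

lemma event_subset {T : ℝ} {N : ℕ} (hT : 2 < T) (hN : 2*T ≤ (N:ℝ)) {x : ℝ}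
    (hx : ∀ n : ℕ, n ≤ N^4 → Bnorm (T/(N:ℝ)^5) (n*N) x ≤ 1 - 1/(N:ℝ)) :
    ∀ j ≤ N^5, q (T/(N:ℝ)^5) j x ≤ 1 := by
  intro j hj
  set δ := T/(N:ℝ)^5 with hδdef
  have hNR : (4:ℝ) < (N:ℝ) := by linarith
  have hN0 : 0 < N := by exact_mod_cast lt_trans (by norm_num : (0:ℝ) < 4) hNR
  have hNpos : (0:ℝ) < (N:ℝ) := by exact_mod_cast hN0
  have hδ0 : 0 ≤ δ := by
    rw [hδdef]; positivity
  -- sqrt bound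
  have hsql : Real.sqrt (2*δ) ≤ 1/(N:ℝ)^2 := by
    have h2δ : 2*δ ≤ (1/(N:ℝ)^2)^2 := by
      rw [hδdef]
      have he : 2*(T/(N:ℝ)^5) = (2*T)/(N:ℝ)^5 := by ring
      have he2 : (1/(N:ℝ)^2)^2 = 1/(N:ℝ)^4 := by ring
      rw [he, he2, div_le_div_iff₀ (by positivity) (by positivity)]
      nlinarith [pow_pos hNpos 4]
    calc Real.sqrt (2*δ) ≤ Real.sqrt ((1/(N:ℝ)^2)^2) := Real.sqrt_le_sqrt h2δ
      _ = 1/(N:ℝ)^2 := Real.sqrt_sq (by positivity)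
  -- decompose j
  have hdm : (j/N)*N + j%N = j := by
    rw [mul_comm]; exact Nat.div_add_mod j N
  have hn4 : j/N ≤ N^4 := by
    have h1 : j/N ≤ N^5/N := Nat.div_le_div_right hj
    have h2 : N^5/N = N^4 := by
      rw [pow_succ]
      exact Nat.mul_div_cancel _ hN0
    rwa [h2] at h1
  have hco := hx (j/N) hn4
  have htri := Bnorm_le_add hδ0 ((j/N)*N) (j%N) x
  rw [hdm] at htri
  have hmod : ((j%N : ℕ):ℝ) ≤ (N:ℝ) := by
    exact_mod_cast (Nat.mod_lt j hN0).le
  have hb : Bnorm δ j x ≤ 1 := by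
    have hstep : ((j%N : ℕ):ℝ) * Real.sqrt (2*δ) ≤ (N:ℝ) * (1/(N:ℝ)^2) := by
      apply mul_le_mul hmod hsql (Real.sqrt_nonneg _) (le_of_lt hNpos)
    have hNN : (N:ℝ) * (1/(N:ℝ)^2) = 1/(N:ℝ) := by field_simp
    rw [hNN] at hstep
    calc Bnorm δ j x ≤ Bnorm δ ((j/N)*N) x + ((j%N : ℕ):ℝ) * Real.sqrt (2*δ) := htri
      _ ≤ (1 - 1/(N:ℝ)) + 1/(N:ℝ) := add_le_add hco hstep
      _ = 1 := by ring
  have hq := Bnorm_sq (δ := δ) j x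
  nlinarith [Bnorm_nonneg (δ := δ) j x]

end S13


open S13

/-- the probability that the discrete stopping time exceeds `T` is bounded
by a quantity `c(T) → 0` uniformly in `N`. -/
theorem statement13 :
    ∃ c : ℝ → ℝ, (∀ T, 0 ≤ c T) ∧ Tendsto c atTop (nhds 0) ∧
      ∀ T : ℝ, 0 < T → ∀ N : ℕ, 2 * T ≤ (N : ℝ) →
        P {x | ∀ n : ℕ, n ≤ N ^ 4 →
            Bnorm (T / (N : ℝ) ^ 5) (n * N) x ≤ 1 - 1 / (N : ℝ)} ≤
          ENNReal.ofReal (c T) := by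
  refine ⟨fun T => if T ≤ 2 then 1 else 2/T, ?_, ?_, ?_⟩
  · intro T
    by_cases h : T ≤ 2
    · simp [h]
    · have hT : (0:ℝ) < T := by linarith [not_le.mp h]
      simp only [if_neg h]
      positivity
  · have hev : (fun T:ℝ => if T ≤ 2 then (1:ℝ) else 2/T) =ᶠ[atTop] fun T => 2/T :=
      (eventually_gt_atTop 2).mono (fun T hT => if_neg (not_le.mpr hT))
    rw [tendsto_congr' hev]
    exact tendsto_const_nhds.div_atTop tendsto_id
  · intro T hT N hN
    beta_reduce
    by_cases hT2 : T ≤ 2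
    · rw [if_pos hT2]
      calc P {x | ∀ n : ℕ, n ≤ N ^ 4 →
            Bnorm (T / (N : ℝ) ^ 5) (n * N) x ≤ 1 - 1 / (N : ℝ)}
          ≤ P Set.univ := measure_mono (Set.subset_univ _)
        _ = volume (Set.Ico (0:ℝ) 1) := by
            rw [P, Measure.restrict_apply_univ]
        _ ≤ ENNReal.ofReal 1 := by
            rw [Real.volume_Ico]
            norm_num
    · have hT2' : 2 < T := not_le.mp hT2
      rw [if_neg hT2]
      set δ := T/(N:ℝ)^5 with hδdef
      have hNR : (4:ℝ) < (N:ℝ) := by linarith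
      have hN0 : 0 < N := by exact_mod_cast lt_trans (by norm_num : (0:ℝ) < 4) hNR
      have hNpos : (0:ℝ) < (N:ℝ) := by exact_mod_cast hN0
      have hN1 : (1:ℝ) ≤ (N:ℝ) := by linarith
      have hN5 : (N:ℝ) ≤ (N:ℝ)^5 := by nlinarith [sq_nonneg ((N:ℝ)^2 - 1), sq_nonneg ((N:ℝ)-1), pow_pos hNpos 3, pow_pos hNpos 2]
      have hδ0 : 0 ≤ δ := by rw [hδdef]; positivity
      have hδ2 : δ ≤ 1/2 := by
        rw [hδdef, div_le_iff₀ (by positivity)]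
        linarith
      have hsub : {x : ℝ | ∀ n : ℕ, n ≤ N ^ 4 →
            Bnorm δ (n * N) x ≤ 1 - 1 / (N : ℝ)}
          ⊆ {x : ℝ | ∀ j ≤ N^5, q δ j x ≤ 1} :=
        fun x hx => event_subset hT2' hN hx
      have h1 := measure_mono (μ := P) hsub
      have h2 : P {x : ℝ | ∀ j ≤ N^5, q δ j x ≤ 1} = volume (Ak δ (N^5)) := by
        rw [P, Measure.restrict_apply (measurableSet_qset (N^5))]
        unfold Ak
        rw [Set.inter_comm]
      have hmb := main_bound hδ0 hδ2 (N^5)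
      have hδK : δ * ((N^5 : ℕ):ℝ) = T := by
        rw [hδdef]
        push_cast
        field_simp
      set aK := (volume (Ak δ (N^5))).toReal with haK
      have haK0 : 0 ≤ aK := ENNReal.toReal_nonneg
      have heq : 2*δ*((N^5 : ℕ):ℝ)*aK = 2*T*aK := by
        rw [← hδK]; ring
      have hfin : 2*T*aK ≤ 4 := by rw [← heq]; exact hmb
      have haK2 : aK ≤ 2/T := by
        rw [le_div_iff₀ (by linarith : (0:ℝ) < T)]
        nlinarith
      have hvol : volume (Ak δ (N^5)) ≤ ENNReal.ofReal (2/T) := by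
        rw [← ENNReal.ofReal_toReal (vol_Ak_lt_top (N^5)).ne]
        exact ENNReal.ofReal_le_ofReal haK2
      calc P {x | ∀ n : ℕ, n ≤ N ^ 4 →
            Bnorm δ (n * N) x ≤ 1 - 1 / (N : ℝ)}
          ≤ P {x : ℝ | ∀ j ≤ N^5, q δ j x ≤ 1} := h1
        _ = volume (Ak δ (N^5)) := h2
        _ ≤ ENNReal.ofReal (2/T) := hvol

end
end
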